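/- arXiv:2204.05250 — 8 statements merged into one kernel-verified Lean document; each statement's English description precedes it below -/
import Mathlib

section
/- Let G be a connected graph on n ≥ 4 vertices, not equal to the path P4, such that either G minus its leaves is identifiable or G is triangle-free. Then G admits a total dominating identifying code of size at most n − s(G), where s(G) is the number of support vertices. -/
open SimpleGraph

/-- The closed neighbourhood of a vertex. -/
def closedNbr {V : Type*} (G : SimpleGraph V) (v : V) : Set V := insert v (G.neighborSet v)

/-- `C` is an identifying code of `G`. -/
def IsIdCode {V : Type*} (G : SimpleGraph V) (C : Set V) : Prop :=
  (∀ v : V, (closedNbr G v ∩ C).Nonempty) ∧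
  ∀ u v : V, closedNbr G u ∩ C = closedNbr G v ∩ C → u = v

/-- A vertex of degree 1. -/
def IsLeaf {V : Type*} (G : SimpleGraph V) (v : V) : Prop := (G.neighborSet v).ncard = 1

/-- The set of leaves of `G`. -/
def leaves {V : Type*} (G : SimpleGraph V) : Set V := {v | IsLeaf G v}

/-- The set of support vertices of `G`. -/
def supports {V : Type*} (G : SimpleGraph V) : Set V := {v | ∃ u, IsLeaf G u ∧ G.Adj v u}

/-- `G` is identifiable: distinct vertices have distinct closed neighbourhoods. -/
def Identifiable {V : Type*} (G : SimpleGraph V) : Prop :=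
  ∀ u v : V, closedNbr G u = closedNbr G v → u = v

/-- `G` is twin-free: no two distinct vertices share an open or closed neighbourhood. -/
def TwinFree {V : Type*} (G : SimpleGraph V) : Prop :=
  ∀ u v : V, u ≠ v →
    G.neighborSet u ≠ G.neighborSet v ∧ closedNbr G u ≠ closedNbr G v

/-- A total dominating identifying code. -/
def IsTotalIdCode {V : Type*} (G : SimpleGraph V) (C : Set V) : Prop :=
  (∀ v : V, (G.neighborSet v ∩ C).Nonempty) ∧
  ∀ u v : V, closedNbr G u ∩ C = closedNbr G v ∩ C → u = v

section Aux
variable {V : Type*} (G : SimpleGraph V)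

lemma idcMemClosedNbr {v x : V} : x ∈ closedNbr G v ↔ x = v ∨ G.Adj v x := by
  simp [closedNbr]

lemma idcLeafNbr {l v : V} (hl : IsLeaf G l) (h : G.Adj v l) :
    G.neighborSet l = {v} := by
  obtain ⟨a, ha⟩ := Set.ncard_eq_one.mp hl
  have hv : v ∈ G.neighborSet l := h.symm
  rw [ha] at hv ⊢
  simp only [Set.mem_singleton_iff] at hv
  rw [hv]

lemma idcWalkMem {S : Set V} (hS : ∀ a ∈ S, ∀ b, G.Adj a b → b ∈ S) :
    ∀ {a b : V}, G.Walk a b → a ∈ S → b ∈ S := by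
  intro a b p
  induction p with
  | nil => exact id
  | cons h _ ih => intro ha; exact ih (hS _ ha _ h)

lemma idcClosureUniv (hconn : G.Connected) {S : Set V} {s : V}
    (hS : ∀ a ∈ S, ∀ b, G.Adj a b → b ∈ S) (hs : s ∈ S) : ∀ x, x ∈ S := by
  intro x
  obtain ⟨p⟩ := hconn.preconnected s x
  exact idcWalkMem G hS p hs

lemma idcCardLe [Fintype V] {S : Set V} (h : ∀ x, x ∈ S) :
    Fintype.card V ≤ S.ncard := by
  have hsub : (Set.univ : Set V) ⊆ S := fun x _ => h x
  calc Fintype.card V = (Set.univ : Set V).ncard := by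
        rw [Set.ncard_univ, Nat.card_eq_fintype_card]
    _ ≤ S.ncard := Set.ncard_le_ncard hsub (Set.toFinite S)

lemma idcP4Iso (a b c d : V)
    (hab : G.Adj a b) (hbc : G.Adj b c) (hcd : G.Adj c d)
    (hac : a ≠ c) (had : a ≠ d) (hbd : b ≠ d)
    (Na : G.neighborSet a = {b}) (Nb : G.neighborSet b = {a, c})
    (Nd : G.neighborSet d = {c})
    (hall : ∀ x, x ∈ ({a, b, c, d} : Set V)) :
    Nonempty (G ≃g pathGraph 4) := by
  classical
  have hnab : a ≠ b := hab.ne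
  have hnbc : b ≠ c := hbc.ne
  have hncd : c ≠ d := hcd.ne
  have nac : ¬ G.Adj a c := by
    intro h
    have h2 : c ∈ G.neighborSet a := h
    rw [Na] at h2
    have h3 : c = b := by simpa using h2
    exact hnbc h3.symm
  have nad : ¬ G.Adj a d := by
    intro h
    have h2 : d ∈ G.neighborSet a := h
    rw [Na] at h2
    have h3 : d = b := by simpa using h2
    exact hbd h3.symm
  have nbd : ¬ G.Adj b d := by
    intro h
    have h2 : d ∈ G.neighborSet b := h
    rw [Nb] at h2
    rcases h2 with h' | h'
    · exact had h'.symm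
    · exact hncd h'.symm
  have nca : ¬ G.Adj c a := fun h => nac h.symm
  have nda : ¬ G.Adj d a := fun h => nad h.symm
  have ndb : ¬ G.Adj d b := fun h => nbd h.symm
  have hba := hab.symm
  have hcb := hbc.symm
  have hdc := hcd.symm
  have hmem : ∀ x : V, x = a ∨ x = b ∨ x = c ∨ x = d := by
    intro x
    have := hall x
    simpa [Set.mem_insert_iff] using this
  refine ⟨⟨⟨fun x => if x = a then 0 else if x = b then 1 else if x = c then 2 else 3,
      fun i => ![a, b, c, d] i, ?_, ?_⟩, ?_⟩⟩
  · intro x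
    rcases hmem x with rfl | rfl | rfl | rfl <;>
      simp [hnab, hnbc, hncd, hac, had, hbd, hnab.symm, hnbc.symm, hncd.symm,
        hac.symm, had.symm, hbd.symm]
  · intro i
    fin_cases i <;>
      simp [hnab, hnbc, hncd, hac, had, hbd, hnab.symm, hnbc.symm, hncd.symm,
        hac.symm, had.symm, hbd.symm]
  · intro x y
    rcases hmem x with rfl | rfl | rfl | rfl <;> rcases hmem y with rfl | rfl | rfl | rfl <;>
      simp [pathGraph_adj, hnab, hnbc, hncd, hac, had, hbd, hnab.symm, hnbc.symm,
        hncd.symm, hac.symm, had.symm, hbd.symm, hab, hbc, hcd, hba, hcb, hdc,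
        nac, nad, nbd, nca, nda, ndb] <;> decide

end Aux

theorem stmt_1 {V : Type*} [Fintype V] (G : SimpleGraph V)
    (hconn : G.Connected) (hn : 4 ≤ Fintype.card V)
    (hP4 : IsEmpty (G ≃g pathGraph 4))
    (hcond : Identifiable (G.induce {v : V | ¬ IsLeaf G v}) ∨ G.CliqueFree 3) :
    ∃ C : Set V, IsTotalIdCode G C ∧
      C.ncard ≤ Fintype.card V - (supports G).ncard := by
  classical
  -- choose one leaf per support vertex
  have hfex : ∀ v ∈ supports G, ∃ u, IsLeaf G u ∧ G.Adj v u := fun v hv => hv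
  set f : V → V := fun v => if h : v ∈ supports G then (hfex v h).choose else v with hf_def
  have hf : ∀ v ∈ supports G, IsLeaf G (f v) ∧ G.Adj v (f v) := by
    intro v hv
    simp only [hf_def, dif_pos hv]
    exact (hfex v hv).choose_spec
  set L0 : Set V := f '' supports G with hL0_def
  have hL0 : ∀ x ∈ L0, ∃ s ∈ supports G, f s = x ∧ IsLeaf G x ∧ G.neighborSet x = {s} := by
    rintro x ⟨s, hs, rfl⟩
    exact ⟨s, hs, rfl, (hf s hs).1, idcLeafNbr G (hf s hs).1 (hf s hs).2⟩
  -- no two adjacent leaves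
  have hnoK2 : ∀ u v : V, G.Adj u v → IsLeaf G u → IsLeaf G v → False := by
    intro u v huv hu hv
    have hNu : G.neighborSet u = {v} := idcLeafNbr G hu huv.symm
    have hNv : G.neighborSet v = {u} := idcLeafNbr G hv huv
    have hclosed : ∀ a ∈ ({u, v} : Set V), ∀ b, G.Adj a b → b ∈ ({u, v} : Set V) := by
      rintro a ha b hab
      rcases ha with rfl | ha
      · have h2 : b ∈ G.neighborSet a := hab
        rw [hNu] at h2
        right; exact h2
      · rcases ha with rfl
        have h2 : b ∈ G.neighborSet a := hab
        rw [hNv] at h2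
        left; exact h2
    have hle := idcCardLe (idcClosureUniv G hconn hclosed (show u ∈ ({u,v}:Set V) by left; rfl))
    have h2 : ({u, v} : Set V).ncard ≤ 2 :=
      le_trans (Set.ncard_insert_le _ _) (by simp)
    omega
  have hsupnl : ∀ v ∈ supports G, ¬ IsLeaf G v := by
    rintro v ⟨u, hu, hadj⟩ hvl
    exact hnoK2 v u hadj hvl hu
  have hL0leaf : ∀ x ∈ L0, IsLeaf G x := by
    intro x hx
    obtain ⟨s, _, _, h, _⟩ := hL0 x hx
    exact h
  have hinj : Set.InjOn f (supports G) := by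
    intro p hp q hq hpq
    have Np : G.neighborSet (f p) = {p} := idcLeafNbr G (hf p hp).1 (hf p hp).2
    have Nq : G.neighborSet (f q) = {q} := idcLeafNbr G (hf q hq).1 (hf q hq).2
    rw [hpq, Nq] at Np
    exact (Set.singleton_eq_singleton_iff.mp Np).symm
  -- every vertex has a neighbour
  have hadjex : ∀ v : V, ∃ w, G.Adj v w := by
    intro v
    obtain ⟨w, hw⟩ := Fintype.exists_ne_of_one_lt_card (by omega) v
    obtain ⟨p⟩ := hconn.preconnected v w
    cases p with
    | nil => exact absurd rfl hw
    | cons h _ => exact ⟨_, h⟩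
  -- neighbours lying in L0
  have hnbrL0 : ∀ v x : V, G.Adj v x → x ∈ L0 → x = f v ∧ v ∈ supports G := by
    intro v x hvx hx
    obtain ⟨s, hs, hfs, hxl, hN⟩ := hL0 x hx
    have h2 : v ∈ G.neighborSet x := hvx.symm
    rw [hN] at h2
    rcases h2 with rfl
    exact ⟨hfs.symm, hs⟩
  -- total domination
  have htd : ∀ v : V, ∃ w, G.Adj v w ∧ w ∉ L0 := by
    intro v
    by_contra hcon
    push_neg at hcon
    obtain ⟨w, hw⟩ := hadjex v
    have hsupv : v ∈ supports G := (hnbrL0 v w hw (hcon w hw)).2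
    have hNv : G.neighborSet v = {f v} := by
      ext x
      simp only [Set.mem_singleton_iff, mem_neighborSet]
      constructor
      · intro hx
        exact (hnbrL0 v x hx (hcon x hx)).1
      · rintro rfl
        exact (hf v hsupv).2
    have hvleaf : IsLeaf G v := by rw [IsLeaf, hNv]; simp
    exact hnoK2 v (f v) (hf v hsupv).2 hvleaf (hf v hsupv).1
  set C : Set V := L0ᶜ with hC_def
  have hmemI : ∀ v x : V, x ∈ closedNbr G v ∩ C ↔ (x = v ∨ G.Adj v x) ∧ x ∉ L0 := by
    intro v x
    rw [Set.mem_inter_iff, idcMemClosedNbr, hC_def, Set.mem_compl_iff]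
  -- code at removed leaves
  have hIleaf : ∀ x ∈ L0, ∃ s ∈ supports G, f s = x ∧ closedNbr G x ∩ C = {s} := by
    intro x hx
    obtain ⟨s, hs, hfs, hxl, hN⟩ := hL0 x hx
    refine ⟨s, hs, hfs, ?_⟩
    ext y
    rw [hmemI, Set.mem_singleton_iff]
    constructor
    · rintro ⟨(rfl | hy), hyL⟩
      · exact absurd hx hyL
      · have h2 : y ∈ G.neighborSet x := hy
        rw [hN] at h2
        exact h2
    · rintro rfl
      refine ⟨Or.inr ?_, fun hsL => hsupnl y hs (hL0leaf y hsL)⟩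
      have : y ∈ G.neighborSet x := by rw [hN]; rfl
      exact this
  have hmix : ∀ u w : V, u ∈ L0 → w ∉ L0 → closedNbr G u ∩ C = closedNbr G w ∩ C → False := by
    intro u w hu hw heq
    obtain ⟨s, hs, hfs, hI⟩ := hIleaf u hu
    have hwmem : w ∈ closedNbr G w ∩ C := (hmemI w w).2 ⟨Or.inl rfl, hw⟩
    rw [← heq, hI, Set.mem_singleton_iff] at hwmem
    subst hwmem
    obtain ⟨t, ht1, ht2⟩ := htd w
    have h2 : t ∈ closedNbr G w ∩ C := (hmemI w t).2 ⟨Or.inr ht1, ht2⟩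
    rw [← heq, hI, Set.mem_singleton_iff] at h2
    subst h2
    exact G.loopless.irrefl _ ht1
  -- the identification property
  have hid : ∀ u w : V, closedNbr G u ∩ C = closedNbr G w ∩ C → u = w := by
    intro u w heq
    by_cases hu : u ∈ L0 <;> by_cases hw : w ∈ L0
    · obtain ⟨s, hs, hfs, hI⟩ := hIleaf u hu
      obtain ⟨s', hs', hfs', hI'⟩ := hIleaf w hw
      rw [hI, hI'] at heq
      have : s = s' := by simpa using heq
      rw [← hfs, ← hfs', this]
    · exact (hmix u w hu hw heq).elim
    · exact ((hmix w u hw hu heq.symm)).elim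
    · by_contra hne
      have huw : G.Adj u w := by
        have hwmem : w ∈ closedNbr G w ∩ C := (hmemI w w).2 ⟨Or.inl rfl, hw⟩
        rw [← heq] at hwmem
        rcases ((hmemI u w).1 hwmem).1 with h | h
        · exact absurd h.symm hne
        · exact h
      -- if one of u, w is a (kept) leaf: small graph contradiction
      have hleafcase : ∀ a b : V, a ∉ L0 → b ∉ L0 → G.Adj a b →
          closedNbr G a ∩ C = closedNbr G b ∩ C → IsLeaf G a → False := by
        intro a b ha hb hab habeq hal
        have hNa : G.neighborSet a = {b} := idcLeafNbr G hal hab.symm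
        have hbs : b ∈ supports G := ⟨a, hal, hab.symm⟩
        have hfb := hf b hbs
        have hIa : closedNbr G a ∩ C = {a, b} := by
          ext y
          rw [hmemI]
          simp only [Set.mem_insert_iff, Set.mem_singleton_iff]
          constructor
          · rintro ⟨(rfl | hy), _⟩
            · left; rfl
            · right
              have h2 : y ∈ G.neighborSet a := hy
              rw [hNa] at h2
              exact h2
          · rintro (rfl | rfl)
            · exact ⟨Or.inl rfl, ha⟩
            · exact ⟨Or.inr hab, hb⟩
        have hNfb : G.neighborSet (f b) = {b} := idcLeafNbr G hfb.1 hfb.2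
        have hclosed : ∀ x ∈ ({a, b, f b} : Set V), ∀ y, G.Adj x y →
            y ∈ ({a, b, f b} : Set V) := by
          intro x hx y hxy
          simp only [Set.mem_insert_iff, Set.mem_singleton_iff] at hx ⊢
          have h2 : y ∈ G.neighborSet x := hxy
          rcases hx with rfl | rfl | rfl
          · rw [hNa] at h2
            simp only [Set.mem_singleton_iff] at h2
            tauto
          · by_cases hyL : y ∈ L0
            · exact Or.inr (Or.inr ((hnbrL0 x y hxy hyL).1))
            · have h3 : y ∈ closedNbr G x ∩ C := (hmemI x y).2 ⟨Or.inr hxy, hyL⟩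
              rw [← habeq, hIa] at h3
              simp only [Set.mem_insert_iff, Set.mem_singleton_iff] at h3
              rcases h3 with rfl | rfl
              · tauto
              · exact absurd hxy (G.loopless.irrefl _)
          · rw [hNfb] at h2
            simp only [Set.mem_singleton_iff] at h2
            tauto
        have hle := idcCardLe (idcClosureUniv G hconn hclosed
          (show a ∈ ({a, b, f b} : Set V) by left; rfl))
        have h3 : ({a, b, f b} : Set V).ncard ≤ 3 := by
          have t1 : ({b, f b} : Set V).ncard ≤ 2 :=
            le_trans (Set.ncard_insert_le _ _) (by simp)
          have t2 := Set.ncard_insert_le a ({b, f b} : Set V)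
          omega
        omega
      by_cases hul : IsLeaf G u
      · exact hleafcase u w hu hw huw heq hul
      by_cases hwl : IsLeaf G w
      · exact hleafcase w u hw hu huw.symm heq.symm hwl
      rcases hcond with hident | htf
      · -- identifiable core
        have hsub : (⟨u, hul⟩ : {v : V | ¬ IsLeaf G v}) = ⟨w, hwl⟩ := by
          apply hident
          ext ⟨x, hx⟩
          have hxL : x ∉ L0 := fun h => hx (hL0leaf x h)
          simp only [closedNbr, Set.mem_insert_iff, mem_neighborSet, comap_adj,
            Function.Embedding.coe_subtype, Subtype.mk.injEq]
          constructor
          · intro h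
            have h2 : x ∈ closedNbr G u ∩ C := by
              rw [hmemI]
              exact ⟨by rcases h with h | h; exact Or.inl h; exact Or.inr h, hxL⟩
            rw [heq, hmemI] at h2
            rcases h2.1 with h3 | h3
            · exact Or.inl h3
            · exact Or.inr h3
          · intro h
            have h2 : x ∈ closedNbr G w ∩ C := by
              rw [hmemI]
              exact ⟨by rcases h with h | h; exact Or.inl h; exact Or.inr h, hxL⟩
            rw [← heq, hmemI] at h2
            rcases h2.1 with h3 | h3
            · exact Or.inl h3
            · exact Or.inr h3
        exact hne (by simpa using hsub)
      · -- triangle-free case: G must be P4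
        have hkey : ∀ a b : V, G.Adj a b → a ∉ L0 → b ∉ L0 →
            closedNbr G a ∩ C = closedNbr G b ∩ C → ¬ IsLeaf G a →
            a ∈ supports G ∧ G.neighborSet a = {b, f a} := by
          intro a b hab ha hb habeq hal
          have hnbr : ∀ x, G.Adj a x → x ≠ b → x ∈ L0 := by
            intro x hax hxb
            by_contra hxL
            have h2 : x ∈ closedNbr G a ∩ C := (hmemI a x).2 ⟨Or.inr hax, hxL⟩
            rw [habeq, hmemI] at h2
            rcases h2.1 with h3 | h3
            · exact hxb h3
            · exact htf {a, b, x} (is3Clique_triple_iff.2 ⟨hab, hax, h3⟩)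
          have hexist : ∃ x, G.Adj a x ∧ x ∈ L0 := by
            by_contra hcon
            push_neg at hcon
            have hNa : G.neighborSet a = {b} := by
              ext y
              simp only [mem_neighborSet, Set.mem_singleton_iff]
              constructor
              · intro hy
                by_contra hyb
                exact hcon y hy (hnbr y hy hyb)
              · rintro rfl; exact hab
            exact hal (by rw [IsLeaf, hNa]; simp)
          obtain ⟨x, hax, hxL⟩ := hexist
          obtain ⟨rfl, hasup⟩ : x = f a ∧ a ∈ supports G := hnbrL0 a x hax hxL
          refine ⟨hasup, ?_⟩
          ext y
          simp only [mem_neighborSet, Set.mem_insert_iff, Set.mem_singleton_iff]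
          constructor
          · intro hy
            by_cases hyb : y = b
            · exact Or.inl hyb
            · exact Or.inr ((hnbrL0 a y hy (hnbr y hy hyb)).1)
          · rintro (rfl | rfl)
            · exact hab
            · exact hax
        obtain ⟨husup, hNu⟩ := hkey u w huw hu hw heq hul
        obtain ⟨hwsup, hNw⟩ := hkey w u huw.symm hw hu heq.symm hwl
        have hfu := hf u husup
        have hfw := hf w hwsup
        have hNfu : G.neighborSet (f u) = {u} := idcLeafNbr G hfu.1 hfu.2
        have hNfw : G.neighborSet (f w) = {w} := idcLeafNbr G hfw.1 hfw.2
        have ne1 : f u ≠ u := fun h => hul (h ▸ hfu.1)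
        have ne2 : f u ≠ w := fun h => hwl (h ▸ hfu.1)
        have ne3 : f w ≠ u := fun h => hul (h ▸ hfw.1)
        have ne4 : f w ≠ w := fun h => hwl (h ▸ hfw.1)
        have ne5 : f u ≠ f w := fun h => hne (hinj husup hwsup h)
        -- every vertex is one of the four
        have hclosed : ∀ x ∈ ({f u, u, w, f w} : Set V), ∀ y, G.Adj x y →
            y ∈ ({f u, u, w, f w} : Set V) := by
          intro x hx y hxy
          simp only [Set.mem_insert_iff, Set.mem_singleton_iff] at hx ⊢
          have h2 : y ∈ G.neighborSet x := hxy
          rcases hx with rfl | rfl | rfl | rfl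
          · rw [hNfu] at h2
            simp only [Set.mem_singleton_iff] at h2
            tauto
          · rw [hNu] at h2
            simp only [Set.mem_insert_iff, Set.mem_singleton_iff] at h2
            tauto
          · rw [hNw] at h2
            simp only [Set.mem_insert_iff, Set.mem_singleton_iff] at h2
            tauto
          · rw [hNfw] at h2
            simp only [Set.mem_singleton_iff] at h2
            tauto
        have hall := idcClosureUniv G hconn hclosed
          (show f u ∈ ({f u, u, w, f w} : Set V) by left; rfl)
        have hNu' : G.neighborSet u = {f u, w} := by rw [hNu, Set.pair_comm]
        exact (hP4.false (idcP4Iso G (f u) u w (f w) hfu.2.symm huw hfw.2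
          ne2 ne5 (Ne.symm ne3) hNfu hNu' hNfw hall).some).elim
  -- cardinality
  have hL0card : L0.ncard = (supports G).ncard := Set.ncard_image_of_injOn hinj
  have hCcard : C.ncard = Fintype.card V - (supports G).ncard := by
    have h2 := Set.ncard_add_ncard_compl L0
    rw [Nat.card_eq_fintype_card] at h2
    rw [hC_def]
    omega
  refine ⟨C, ⟨?_, hid⟩, le_of_eq hCcard⟩
  intro v
  obtain ⟨w, hw1, hw2⟩ := htd v
  exact ⟨w, hw1, hw2⟩
end

section
/- Let G be a connected identifiable graph on n ≥ 3 vertices. Then G has an identifying code of size at most n − s(G) + 1, where s(G) is the number of support vertices of G. -/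
open SimpleGraph

namespace StmtAux
set_option linter.unusedSectionVars false
open scoped Classical
variable {V : Type*} [Fintype V] {G : SimpleGraph V}

lemma mem_cN {v w : V} : w ∈ closedNbr G v ↔ w = v ∨ G.Adj v w := by
  simp [closedNbr]

lemma self_mem_cN (v : V) : v ∈ closedNbr G v := Set.mem_insert _ _

lemma cN_comm {v w : V} : w ∈ closedNbr G v ↔ v ∈ closedNbr G w := by
  rw [mem_cN, mem_cN, eq_comm, G.adj_comm]

noncomputable def sig (G : SimpleGraph V) (ℓ : V) : V :=
  if h : ∃ s, G.neighborSet ℓ = {s} then h.choose else ℓ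

lemma sig_spec {ℓ : V} (hℓ : ℓ ∈ leaves G) : G.neighborSet ℓ = {sig G ℓ} := by
  have h : ∃ s, G.neighborSet ℓ = {s} := Set.ncard_eq_one.mp hℓ
  simp only [sig, dif_pos h]
  exact h.choose_spec

lemma adj_sig {ℓ : V} (hℓ : ℓ ∈ leaves G) : G.Adj ℓ (sig G ℓ) := by
  have h : sig G ℓ ∈ G.neighborSet ℓ := by rw [sig_spec hℓ]; exact rfl
  exact h

lemma eq_sig_of_adj {ℓ w : V} (hℓ : ℓ ∈ leaves G) (h : G.Adj w ℓ) : w = sig G ℓ := by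
  have : w ∈ G.neighborSet ℓ := h.symm
  rwa [sig_spec hℓ, Set.mem_singleton_iff] at this

lemma sig_supports {ℓ : V} (hℓ : ℓ ∈ leaves G) : sig G ℓ ∈ supports G :=
  ⟨ℓ, hℓ, (adj_sig hℓ).symm⟩

lemma closed_univ (hconn : G.Connected) {A : Set V}
    (hA : ∀ a ∈ A, ∀ b, G.Adj a b → b ∈ A) {a₀ : V} (ha : a₀ ∈ A) (v : V) : v ∈ A := by
  have key : ∀ {x y : V}, G.Walk x y → x ∈ A → y ∈ A := by
    intro x y p
    induction p with
    | nil => exact id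
    | cons h q ih => exact fun hx => ih (hA _ hx _ h)
  obtain ⟨p⟩ := hconn.preconnected a₀ v
  exact key p ha

lemma support_not_leaf (hconn : G.Connected) (hn : 3 ≤ Fintype.card V)
    {s : V} (hs : s ∈ supports G) : s ∉ leaves G := by
  intro hsl
  obtain ⟨u, hu, hadj⟩ := hs
  have hus : u = sig G s := eq_sig_of_adj hsl hadj.symm
  have hsu : s = sig G u := eq_sig_of_adj hu hadj
  have hA : ∀ a ∈ ({s, u} : Set V), ∀ b, G.Adj a b → b ∈ ({s, u} : Set V) := by
    rintro a (rfl | rfl) b hb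
    · have : b ∈ G.neighborSet a := hb
      rw [sig_spec hsl, Set.mem_singleton_iff] at this
      have hb2 : b = u := this.trans hus.symm
      simp [hb2]
    · have : b ∈ G.neighborSet a := hb
      rw [sig_spec hu, Set.mem_singleton_iff] at this
      have hb2 : b = s := this.trans hsu.symm
      simp [hb2]
  have huniv : ∀ v, v ∈ ({s, u} : Set V) := closed_univ hconn hA (Set.mem_insert _ _)
  have : (Set.univ : Set V).ncard ≤ ({s, u} : Set V).ncard :=
    Set.ncard_le_ncard (fun v _ => huniv v) (Set.toFinite _)
  rw [Set.ncard_univ, Nat.card_eq_fintype_card] at this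
  have h2 : ({s, u} : Set V).ncard ≤ 2 := by
    apply le_trans (Set.ncard_insert_le _ _)
    simp
  omega


noncomputable def lc (G : SimpleGraph V) (s : V) : V :=
  if h : ∃ u, IsLeaf G u ∧ G.Adj s u then h.choose else s

lemma lc_spec {s : V} (hs : s ∈ supports G) : lc G s ∈ leaves G ∧ G.Adj s (lc G s) := by
  have h : ∃ u, IsLeaf G u ∧ G.Adj s u := hs
  simp only [lc, dif_pos h]
  exact ⟨h.choose_spec.1, h.choose_spec.2⟩

lemma lc_leaf {s : V} (hs : s ∈ supports G) : lc G s ∈ leaves G := (lc_spec hs).1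
lemma lc_adj {s : V} (hs : s ∈ supports G) : G.Adj s (lc G s) := (lc_spec hs).2

lemma sig_lc {s : V} (hs : s ∈ supports G) : sig G (lc G s) = s :=
  (eq_sig_of_adj (lc_leaf hs) (lc_adj hs)).symm

/-- closed neighbourhood minus leaves -/
def fs (G : SimpleGraph V) (w : V) : Set V := closedNbr G w \ leaves G

lemma mem_fs {y w : V} : y ∈ fs G w ↔ y ∈ closedNbr G w ∧ y ∉ leaves G := Iff.rfl

lemma self_mem_fs {w : V} (hw : w ∉ leaves G) : w ∈ fs G w := ⟨self_mem_cN w, hw⟩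

def cls (G : SimpleGraph V) (w : V) : Set V := {x | x ∉ leaves G ∧ fs G x = fs G w}

lemma self_mem_cls {w : V} (hw : w ∉ leaves G) : w ∈ cls G w := ⟨hw, rfl⟩

lemma cls_eq {x w : V} (hx : x ∈ cls G w) : cls G x = cls G w := by
  ext y
  simp only [cls, Set.mem_setOf_eq, hx.2]

noncomputable def rp (G : SimpleGraph V) (w : V) : V :=
  if h : ((cls G w) \ supports G).Nonempty then h.choose
  else if h2 : (cls G w).Nonempty then h2.choose else w

lemma rp_mem {w : V} (hw : w ∉ leaves G) : rp G w ∈ cls G w := by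
  unfold rp
  split_ifs with h1 h2
  · exact h1.choose_spec.1
  · exact h2.choose_spec
  · exact absurd ⟨w, self_mem_cls hw⟩ h2

lemma rp_pref {w : V} (h : rp G w ∈ supports G) : ∀ x ∈ cls G w, x ∈ supports G := by
  unfold rp at h
  split_ifs at h with h1 h2
  · exact absurd h h1.choose_spec.2
  · intro x hx
    by_contra hxS
    exact h1 ⟨x, hx, hxS⟩
  · intro x hx
    exact absurd ⟨x, hx⟩ h2

lemma rp_congr {w w' : V} (hw' : (cls G w').Nonempty) (h : cls G w = cls G w') :
    rp G w = rp G w' := by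
  unfold rp
  rw [h]
  split_ifs with h1 h2
  all_goals first | rfl | exact absurd hw' h2

def Xs (G : SimpleGraph V) : Set V := {w | w ∈ supports G ∧ rp G w ≠ w}

lemma Xs_sub {x : V} (h : x ∈ Xs G) : x ∈ supports G := h.1

lemma rp_eq_self {w : V} (hs : w ∈ supports G) (h : w ∉ Xs G) : rp G w = w := by
  by_contra hne
  exact h ⟨hs, hne⟩

lemma X_elim (hconn : G.Connected) (hn : 3 ≤ Fintype.card V) {x : V} (hx : x ∈ Xs G) :
    ∃ r, r ∉ leaves G ∧ r ∉ Xs G ∧ fs G r = fs G x ∧ r ≠ x := by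
  have hxl : x ∉ leaves G := support_not_leaf hconn hn hx.1
  have hr := rp_mem (G := G) hxl
  refine ⟨rp G x, hr.1, ?_, hr.2, hx.2⟩
  intro hrX
  have : rp G (rp G x) = rp G x := by
    apply rp_congr ⟨x, self_mem_cls hxl⟩ (cls_eq hr)
  exact hrX.2 this

noncomputable def Dful (G : SimpleGraph V) : Set V :=
  (lc G '' (supports G \ Xs G)) ∪ Xs G

lemma mem_Dful_leaf (hconn : G.Connected) (hn : 3 ≤ Fintype.card V) {ℓ : V}
    (hℓ : ℓ ∈ leaves G) (h : ℓ ∈ Dful G) : ℓ = lc G (sig G ℓ) ∧ sig G ℓ ∉ Xs G := by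
  rcases h with ⟨s, ⟨hsS, hsX⟩, heq⟩ | hX
  · have : sig G ℓ = s := by rw [← heq, sig_lc hsS]
    rw [this, heq]
    exact ⟨rfl, hsX⟩
  · exact absurd hℓ (support_not_leaf hconn hn (Xs_sub hX))

lemma mem_Dful_nonleaf {w : V} (hw : w ∉ leaves G) (h : w ∈ Dful G) : w ∈ Xs G := by
  rcases h with ⟨s, ⟨hsS, _⟩, heq⟩ | hX
  · exact absurd (heq ▸ lc_leaf hsS) hw
  · exact hX

lemma lc_not_Dful (hconn : G.Connected) (hn : 3 ≤ Fintype.card V) {x : V} (hx : x ∈ Xs G) :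
    lc G x ∉ Dful G := by
  intro h
  have hl : lc G x ∈ leaves G := lc_leaf (Xs_sub hx)
  have := (mem_Dful_leaf hconn hn hl h).2
  rw [sig_lc (Xs_sub hx)] at this
  exact this hx

lemma crossX (hconn : G.Connected) (hn : 3 ≤ Fintype.card V) {x a b : V} (hx : x ∈ Xs G)
    (ha : a ∉ leaves G) (hb : b ∉ leaves G) (hxa : x ∈ closedNbr G a) (hxb : x ∉ closedNbr G b) :
    ∃ r, r ∈ closedNbr G a ∧ r ∉ closedNbr G b ∧ r ∉ Dful G := by
  obtain ⟨r, hrl, hrX, hrf, _⟩ := X_elim hconn hn hx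
  refine ⟨r, ?_, ?_, ?_⟩
  · have haf : a ∈ fs G x := ⟨cN_comm.mp hxa, ha⟩
    rw [← hrf] at haf
    exact cN_comm.mp haf.1
  · intro hrb
    have hbf : b ∈ fs G r := ⟨cN_comm.mp hrb, hb⟩
    rw [hrf] at hbf
    exact hxb (cN_comm.mp hbf.1)
  · intro hD
    exact hrX (mem_Dful_nonleaf hrl hD)


def Wit (G : SimpleGraph V) (D : Set V) (u v : V) : Prop :=
  ∃ y, y ∉ D ∧ ((y ∈ closedNbr G u ∧ y ∉ closedNbr G v) ∨ (y ∈ closedNbr G v ∧ y ∉ closedNbr G u))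

lemma Wit.symm {D : Set V} {u v : V} (h : Wit G D u v) : Wit G D v u := by
  obtain ⟨y, h1, h2⟩ := h
  exact ⟨y, h1, h2.symm⟩

lemma Wit.mono {D D' : Set V} {u v : V} (hD : D ⊆ D') (h : Wit G D' u v) : Wit G D u v := by
  obtain ⟨y, h1, h2⟩ := h
  exact ⟨y, fun hy => h1 (hD hy), h2⟩

lemma leaf_notin_cN_leaf {u v : V} (hu : u ∈ leaves G) (huv : u ≠ v)
    (hsig : sig G u ≠ v) : u ∉ closedNbr G v := by
  intro h
  rcases mem_cN.mp h with h1 | h1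
  · exact huv h1
  · exact hsig (eq_sig_of_adj hu h1).symm

lemma LLaux (hconn : G.Connected) (hn : 3 ≤ Fintype.card V) {u v : V}
    (hu : u ∈ leaves G) (hv : v ∈ leaves G) (huv : u ≠ v) : Wit G (Dful G) u v := by
  have hsu : sig G u ∉ leaves G := support_not_leaf hconn hn (sig_supports hu)
  have hsv : sig G v ∉ leaves G := support_not_leaf hconn hn (sig_supports hv)
  have huv' : u ∉ closedNbr G v := leaf_notin_cN_leaf hu huv (fun h => hsu (by rw [h]; exact hv))
  have hvu' : v ∉ closedNbr G u := leaf_notin_cN_leaf hv huv.symm (fun h => hsv (by rw [h]; exact hu))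
  by_cases hss : sig G u = sig G v
  · -- same support: one of u, v escapes Dful
    by_cases huD : u ∈ Dful G
    · refine ⟨v, ?_, Or.inr ⟨self_mem_cN v, hvu'⟩⟩
      intro hvD
      have h1 := (mem_Dful_leaf hconn hn hu huD).1
      have h2 := (mem_Dful_leaf hconn hn hv hvD).1
      rw [hss] at h1
      exact huv (h1.trans h2.symm)
    · exact ⟨u, huD, Or.inl ⟨self_mem_cN u, huv'⟩⟩
  · -- different supports
    by_cases hsD : sig G u ∈ Dful G
    · have hsX : sig G u ∈ Xs G := mem_Dful_nonleaf hsu hsD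
      refine ⟨u, ?_, Or.inl ⟨self_mem_cN u, huv'⟩⟩
      intro huD
      exact (mem_Dful_leaf hconn hn hu huD).2 hsX
    · refine ⟨sig G u, hsD, Or.inl ⟨mem_cN.mpr (Or.inr (adj_sig hu)), ?_⟩⟩
      intro h
      rcases mem_cN.mp h with h1 | h1
      · exact hsu (by rw [h1]; exact hv)
      · exact hss (eq_sig_of_adj hv h1.symm)

lemma LNaux (hconn : G.Connected) (hn : 3 ≤ Fintype.card V) {u v : V}
    (hns : ∀ t ∈ supports G, t ∉ Xs G → ¬ (fs G t \ {t} ⊆ Xs G))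
    (hu : u ∈ leaves G) (hv : v ∉ leaves G) (huv : u ≠ v) : Wit G (Dful G) u v := by
  by_cases hveq : sig G u = v
  · -- v is the support of u
    have hvS : v ∈ supports G := hveq ▸ sig_supports hu
    by_cases hex : ∃ w, w ∈ fs G v ∧ w ≠ v ∧ w ∉ Xs G
    · obtain ⟨w, hwf, hwv, hwX⟩ := hex
      refine ⟨w, ?_, Or.inr ⟨hwf.1, ?_⟩⟩
      · intro hD
        exact hwX (mem_Dful_nonleaf hwf.2 hD)
      · intro h
        rcases mem_cN.mp h with h1 | h1
        · exact hwf.2 (h1 ▸ hu)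
        · exact hwv ((eq_sig_of_adj hu h1.symm).trans hveq)
    · push_neg at hex
      have hsub : fs G v \ {v} ⊆ Xs G := by
        rintro w ⟨hwf, hwv⟩
        exact hex w hwf hwv
      by_cases hvX : v ∈ Xs G
      · obtain ⟨r, hrl, hrX, hrf, hrv⟩ := X_elim hconn hn hvX
        have : r ∈ fs G v := by
          rw [← hrf]; exact self_mem_fs hrl
        exact absurd (hsub ⟨this, hrv⟩) hrX
      · exact absurd hsub (hns v hvS hvX)
  · -- v is not the support of u
    have hucn : ∀ y, y ∉ leaves G → y ≠ v → y ∉ closedNbr G u → True := fun _ _ _ _ => trivial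
    by_cases hvD : v ∈ Dful G
    · have hvX : v ∈ Xs G := mem_Dful_nonleaf hv hvD
      have hvS := Xs_sub hvX
      refine ⟨lc G v, lc_not_Dful hconn hn hvX, Or.inr ⟨mem_cN.mpr (Or.inr (lc_adj hvS)), ?_⟩⟩
      intro h
      rcases mem_cN.mp h with h1 | h1
      · -- lc v = u then sig u = v
        apply hveq
        rw [← h1, sig_lc hvS]
      ·
        have : lc G v = sig G u := by
          have : lc G v ∈ G.neighborSet u := h1
          rwa [sig_spec hu, Set.mem_singleton_iff] at this
        have hsl : sig G u ∉ leaves G := support_not_leaf hconn hn (sig_supports hu)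
        exact hsl (this ▸ lc_leaf hvS)
    · refine ⟨v, hvD, Or.inr ⟨self_mem_cN v, ?_⟩⟩
      intro h
      rcases mem_cN.mp h with h1 | h1
      · exact hv (h1 ▸ hu)
      · exact hveq (eq_sig_of_adj hu h1.symm).symm


lemma NNside (hconn : G.Connected) (hn : 3 ≤ Fintype.card V) {u v z : V}
    (hu : u ∉ leaves G) (hv : v ∉ leaves G) (huv : u ≠ v)
    (hz1 : z ∈ closedNbr G u) (hz2 : z ∉ closedNbr G v) : Wit G (Dful G) u v := by
  by_cases hzD : z ∈ Dful G
  swap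
  · exact ⟨z, hzD, Or.inl ⟨hz1, hz2⟩⟩
  by_cases hzl : z ∈ leaves G
  swap
  · have hzX := mem_Dful_nonleaf hzl hzD
    obtain ⟨r, h1, h2, h3⟩ := crossX hconn hn hzX hu hv hz1 hz2
    exact ⟨r, h3, Or.inl ⟨h1, h2⟩⟩
  -- z is a leaf of u, and z ∈ Dful
  have hadj : G.Adj u z := by
    rcases mem_cN.mp hz1 with h1 | h1
    · exact absurd (h1 ▸ hzl) hu
    · exact h1
  have hzu : u = sig G z := eq_sig_of_adj hzl hadj
  obtain ⟨hzl2, hzX⟩ := mem_Dful_leaf hconn hn hzl hzD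
  have huS : u ∈ supports G := hzu ▸ sig_supports hzl
  have huX : u ∉ Xs G := by rw [hzu]; exact hzX
  by_cases hex2 : ∃ ℓ, ℓ ∈ leaves G ∧ G.Adj u ℓ ∧ ℓ ≠ lc G u
  · obtain ⟨ℓ, hl1, hl2, hl3⟩ := hex2
    have hsig : sig G ℓ = u := (eq_sig_of_adj hl1 hl2).symm
    refine ⟨ℓ, ?_, Or.inl ⟨mem_cN.mpr (Or.inr hl2), ?_⟩⟩
    · intro hD
      have := (mem_Dful_leaf hconn hn hl1 hD).1
      rw [hsig] at this
      exact hl3 this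
    · intro h
      rcases mem_cN.mp h with h1 | h1
      · exact hv (h1 ▸ hl1)
      · exact huv ((eq_sig_of_adj hl1 h1).trans hsig).symm
  · by_cases hf : fs G u = fs G v
    · have hclseq : cls G v = cls G u := cls_eq ⟨hv, hf.symm⟩
      have hrpu : rp G u = u := rp_eq_self huS huX
      have hrpv : rp G v = u := by
        rw [rp_congr ⟨u, self_mem_cls hu⟩ hclseq]
        exact hrpu
      by_cases hvS : v ∈ supports G
      · have hvX : v ∈ Xs G := ⟨hvS, by rw [hrpv]; exact huv⟩
        refine ⟨lc G v, lc_not_Dful hconn hn hvX, Or.inr ⟨mem_cN.mpr (Or.inr (lc_adj hvS)), ?_⟩⟩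
        intro h
        rcases mem_cN.mp h with h1 | h1
        · exact hu (h1 ▸ lc_leaf hvS)
        · exact huv ((eq_sig_of_adj (lc_leaf hvS) h1).trans (sig_lc hvS))
      · have : rp G u ∈ supports G := by rw [hrpu]; exact huS
        exact absurd (rp_pref this v ⟨hv, hf.symm⟩) hvS
    · obtain ⟨z', hz'⟩ : ∃ z', (z' ∈ fs G u ∧ z' ∉ fs G v) ∨ (z' ∈ fs G v ∧ z' ∉ fs G u) := by
        by_contra hc
        push_neg at hc
        exact hf (Set.ext fun y => ⟨(hc y).1, (hc y).2⟩)
      rcases hz' with ⟨ha, hb⟩ | ⟨ha, hb⟩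
      · have hcn2 : z' ∉ closedNbr G v := fun h => hb ⟨h, ha.2⟩
        by_cases hD : z' ∈ Dful G
        · obtain ⟨r, h1, h2, h3⟩ := crossX hconn hn (mem_Dful_nonleaf ha.2 hD) hu hv ha.1 hcn2
          exact ⟨r, h3, Or.inl ⟨h1, h2⟩⟩
        · exact ⟨z', hD, Or.inl ⟨ha.1, hcn2⟩⟩
      · have hcn2 : z' ∉ closedNbr G u := fun h => hb ⟨h, ha.2⟩
        by_cases hD : z' ∈ Dful G
        · obtain ⟨r, h1, h2, h3⟩ := crossX hconn hn (mem_Dful_nonleaf ha.2 hD) hv hu ha.1 hcn2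
          exact ⟨r, h3, Or.inr ⟨h1, h2⟩⟩
        · exact ⟨z', hD, Or.inr ⟨ha.1, hcn2⟩⟩

lemma NNaux (hconn : G.Connected) (hid : Identifiable G) (hn : 3 ≤ Fintype.card V) {u v : V}
    (hu : u ∉ leaves G) (hv : v ∉ leaves G) (huv : u ≠ v) : Wit G (Dful G) u v := by
  have hne : closedNbr G u ≠ closedNbr G v := fun h => huv (hid u v h)
  obtain ⟨z, hz⟩ : ∃ z, (z ∈ closedNbr G u ∧ z ∉ closedNbr G v) ∨
      (z ∈ closedNbr G v ∧ z ∉ closedNbr G u) := by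
    by_contra hc
    push_neg at hc
    exact hne (Set.ext fun y => ⟨(hc y).1, (hc y).2⟩)
  rcases hz with ⟨h1, h2⟩ | ⟨h1, h2⟩
  · exact NNside hconn hn hu hv huv h1 h2
  · exact (NNside hconn hn hv hu huv.symm h1 h2).symm

lemma dom_Dful (hconn : G.Connected) (hn : 3 ≤ Fintype.card V) (v : V) :
    ∃ y, y ∈ closedNbr G v ∧ y ∉ Dful G := by
  by_cases hvl : v ∈ leaves G
  · by_cases hX : sig G v ∈ Xs G
    · refine ⟨v, self_mem_cN v, ?_⟩
      intro hD
      exact (mem_Dful_leaf hconn hn hvl hD).2 hX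
    · refine ⟨sig G v, mem_cN.mpr (Or.inr (adj_sig hvl)), ?_⟩
      intro hD
      exact hX (mem_Dful_nonleaf (support_not_leaf hconn hn (sig_supports hvl)) hD)
  · by_cases hvD : v ∈ Dful G
    · obtain ⟨r, hrl, hrX, hrf, _⟩ := X_elim hconn hn (mem_Dful_nonleaf hvl hvD)
      have : r ∈ fs G v := by rw [← hrf]; exact self_mem_fs hrl
      refine ⟨r, this.1, fun hD => hrX (mem_Dful_nonleaf hrl hD)⟩
    · exact ⟨v, self_mem_cN v, hvD⟩


lemma Dful_ncard (hconn : G.Connected) (hn : 3 ≤ Fintype.card V) :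
    (Dful G).ncard = (supports G).ncard := by
  have hinj : Set.InjOn (lc G) (supports G \ Xs G) := by
    intro a ha b hb h
    have h1 : a = sig G (lc G a) := (sig_lc ha.1).symm
    rw [h1, h, sig_lc hb.1]
  have h1 : (lc G '' (supports G \ Xs G)).ncard = (supports G \ Xs G).ncard :=
    Set.ncard_image_of_injOn hinj
  have hdisj : Disjoint (lc G '' (supports G \ Xs G)) (Xs G) := by
    rw [Set.disjoint_left]
    rintro a ⟨s, hs, rfl⟩ haX
    exact support_not_leaf hconn hn (Xs_sub haX) (lc_leaf hs.1)
  rw [Dful, Set.ncard_union_eq hdisj (Set.toFinite _) (Set.toFinite _), h1]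
  exact Set.ncard_diff_add_ncard_of_subset (fun x => Xs_sub) (Set.toFinite _)

lemma special_case (hconn : G.Connected) (hn : 3 ≤ Fintype.card V)
    (h2 : 2 ≤ (supports G).ncard) {v : V} (hvS : v ∈ supports G) (hvX : v ∉ Xs G)
    (hsp : fs G v \ {v} ⊆ Xs G) :
    ∃ D : Set V, (supports G).ncard = D.ncard + 1 ∧
      (∀ w, ∃ y, y ∈ closedNbr G w ∧ y ∉ D) ∧ (∀ u w, u ≠ w → Wit G D u w) := by
  classical
  set K := fs G v with hK
  have hvl : v ∉ leaves G := support_not_leaf hconn hn hvS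
  have hvK : v ∈ K := self_mem_fs hvl
  have hKleaf : ∀ x ∈ K, x ∉ leaves G := fun x hx => hx.2
  have hXmem : ∀ x ∈ K, x ≠ v → x ∈ Xs G := fun x hx hxv => hsp ⟨hx, hxv⟩
  have hkf : ∀ x ∈ K, fs G x = K := by
    intro x hx
    by_cases hxv : x = v
    · rw [hxv]
    · obtain ⟨r, hrl, hrX, hrf, hrx⟩ := X_elim hconn hn (hXmem x hx hxv)
      have hvfx : v ∈ fs G x := ⟨cN_comm.mp hx.1, hvl⟩
      have hvfr : v ∈ fs G r := by rw [hrf]; exact hvfx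
      have hrK : r ∈ K := ⟨cN_comm.mp hvfr.1, hrl⟩
      have hrv : r = v := by
        by_contra hne
        exact hrX (hXmem r hrK hne)
      rw [← hrf, hrv]
  have hKS : ∀ x ∈ K, x ∈ supports G := by
    intro x hx
    by_cases hxv : x = v
    · rw [hxv]; exact hvS
    · exact Xs_sub (hXmem x hx hxv)
  have hcNK : ∀ x ∈ K, ∀ w, w ∈ closedNbr G x ↔ w ∈ K ∨ (w ∈ leaves G ∧ sig G w = x) := by
    intro x hx w
    constructor
    · intro hw
      by_cases hwl : w ∈ leaves G
      · refine Or.inr ⟨hwl, ?_⟩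
        rcases mem_cN.mp hw with h1 | h1
        · exact absurd (h1 ▸ hwl) (hKleaf x hx)
        · exact (eq_sig_of_adj hwl h1).symm
      · have : w ∈ fs G x := ⟨hw, hwl⟩
        rw [hkf x hx] at this
        exact Or.inl this
    · rintro (hw | ⟨hwl, hws⟩)
      · have : w ∈ fs G x := by rw [hkf x hx]; exact hw
        exact this.1
      · refine mem_cN.mpr (Or.inr ?_)
        have := (adj_sig hwl).symm
        rwa [hws] at this
  have hA : ∀ w : V, w ∈ K ∨ (w ∈ leaves G ∧ sig G w ∈ K) := by
    have hclosed : ∀ a ∈ (K ∪ {ℓ | ℓ ∈ leaves G ∧ sig G ℓ ∈ K} : Set V),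
        ∀ b, G.Adj a b → b ∈ (K ∪ {ℓ | ℓ ∈ leaves G ∧ sig G ℓ ∈ K} : Set V) := by
      rintro a (haK | ⟨hal, has⟩) b hab
      · by_cases hbl : b ∈ leaves G
        · right
          refine ⟨hbl, ?_⟩
          have : a = sig G b := eq_sig_of_adj hbl hab
          rw [← this]; exact haK
        · left
          have : b ∈ fs G a := ⟨mem_cN.mpr (Or.inr hab), hbl⟩
          rw [hkf a haK] at this
          exact this
      · left
        have : b = sig G a := eq_sig_of_adj hal hab.symm
        rw [this]; exact has
    intro w
    have := closed_univ hconn hclosed (Or.inl hvK) w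
    rcases this with h | h
    · exact Or.inl h
    · exact Or.inr h
  have hSK : supports G = K := by
    apply Set.eq_of_subset_of_subset
    · intro s hs
      rcases hA s with h | h
      · exact h
      · exact absurd h.1 (support_not_leaf hconn hn hs)
    · exact hKS
  obtain ⟨x₀, hx₀K, hx₀v⟩ : ∃ x₀ ∈ K, x₀ ≠ v := by
    by_contra hc
    push_neg at hc
    have hsub : supports G ⊆ {v} := by
      rw [hSK]; intro x hx; exact hc x hx
    have := Set.ncard_le_ncard hsub (Set.toFinite _)
    rw [Set.ncard_singleton] at this
    omega
  set D : Set V := insert (lc G v) (K \ {v, x₀}) with hD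
  have hlcvl : lc G v ∈ leaves G := lc_leaf hvS
  have hmemD : ∀ y, y ∈ D ↔ y = lc G v ∨ (y ∈ K ∧ y ≠ v ∧ y ≠ x₀) := by
    intro y
    simp only [hD, Set.mem_insert_iff, Set.mem_diff, Set.mem_singleton_iff]
    constructor
    · rintro (h | ⟨h1, h2⟩)
      · exact Or.inl h
      · push_neg at h2
        exact Or.inr ⟨h1, h2⟩
    · rintro (h | ⟨h1, h2, h3⟩)
      · exact Or.inl h
      · exact Or.inr ⟨h1, by push_neg; exact ⟨h2, h3⟩⟩
  have hvD : v ∉ D := by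
    intro h
    rcases (hmemD v).mp h with h1 | h1
    · exact hvl (h1 ▸ hlcvl)
    · exact h1.2.1 rfl
  have hx₀D : x₀ ∉ D := by
    intro h
    rcases (hmemD x₀).mp h with h1 | h1
    · exact (hKleaf x₀ hx₀K) (h1 ▸ hlcvl)
    · exact h1.2.2 rfl
  have hleafD : ∀ ℓ ∈ leaves G, ℓ ∈ D → ℓ = lc G v := by
    intro ℓ hl h
    rcases (hmemD ℓ).mp h with h1 | h1
    · exact h1
    · exact absurd hl (hKleaf ℓ h1.1)
  have hlcD : ∀ s ∈ K, s ≠ v → lc G s ∉ D := by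
    intro s hsK hsv h
    have hsS := hKS s hsK
    rcases (hmemD _).mp h with h1 | h1
    · apply hsv
      have : sig G (lc G s) = sig G (lc G v) := by rw [h1]
      rwa [sig_lc hsS, sig_lc hvS] at this
    · exact (hKleaf _ h1.1) (lc_leaf hsS)
  have mixed : ∀ u w, u ∈ K → w ∈ leaves G → sig G w ∈ K → u ≠ w → Wit G D u w := by
    intro u w huK hwl hwsK huw
    by_cases htu : sig G w = u
    · by_cases huv2 : u = v
      · refine ⟨x₀, hx₀D, Or.inl ⟨(hcNK u huK x₀).mpr (Or.inl hx₀K), ?_⟩⟩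
        intro h
        rcases mem_cN.mp h with h1 | h1
        · exact (hKleaf x₀ hx₀K) (h1 ▸ hwl)
        · have : x₀ = sig G w := eq_sig_of_adj hwl h1.symm
          exact hx₀v ((this.trans htu).trans huv2)
      · refine ⟨v, hvD, Or.inl ⟨(hcNK u huK v).mpr (Or.inl hvK), ?_⟩⟩
        intro h
        rcases mem_cN.mp h with h1 | h1
        · exact hvl (h1 ▸ hwl)
        · have : v = sig G w := eq_sig_of_adj hwl h1.symm
          exact huv2 (this.trans htu).symm
    · by_cases hwD : w ∈ D
      · have hwlc : w = lc G v := hleafD w hwl hwD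
        have htv : sig G w = v := by rw [hwlc, sig_lc hvS]
        by_cases huD : u ∈ D
        · refine ⟨x₀, hx₀D, Or.inl ⟨(hcNK u huK x₀).mpr (Or.inl hx₀K), ?_⟩⟩
          intro h
          rcases mem_cN.mp h with h1 | h1
          · exact (hKleaf x₀ hx₀K) (h1 ▸ hwl)
          · exact hx₀v ((eq_sig_of_adj hwl h1.symm).trans htv)
        · refine ⟨u, huD, Or.inl ⟨self_mem_cN u, ?_⟩⟩
          intro h
          rcases mem_cN.mp h with h1 | h1
          · exact (hKleaf u huK) (h1 ▸ hwl)
          · exact htu (eq_sig_of_adj hwl h1.symm).symm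
      · refine ⟨w, hwD, Or.inr ⟨self_mem_cN w, ?_⟩⟩
        intro h
        rcases (hcNK u huK w).mp h with h1 | h1
        · exact (hKleaf w h1) hwl
        · exact htu h1.2
  have KKcase : ∀ u w, u ∈ K → w ∈ K → u ≠ w → Wit G D u w := by
    intro u w huK hwK huw
    by_cases huv2 : u = v
    · have hwv : w ≠ v := fun h => huw (huv2.trans h.symm)
      have hwS : w ∈ supports G := hKS w hwK
      refine ⟨lc G w, hlcD w hwK hwv, Or.inr ⟨mem_cN.mpr (Or.inr (lc_adj hwS)), ?_⟩⟩
      intro h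
      rcases (hcNK u huK _).mp h with h1 | h1
      · exact (hKleaf _ h1) (lc_leaf hwS)
      · exact huw ((sig_lc hwS).symm.trans h1.2).symm
    · have huS := hKS u huK
      refine ⟨lc G u, hlcD u huK huv2, Or.inl ⟨mem_cN.mpr (Or.inr (lc_adj huS)), ?_⟩⟩
      intro h
      rcases (hcNK w hwK _).mp h with h1 | h1
      · exact (hKleaf _ h1) (lc_leaf huS)
      · exact huw ((sig_lc huS).symm.trans h1.2)
  have LLcase : ∀ u w, u ∈ leaves G → w ∈ leaves G → sig G u ∈ K → sig G w ∈ K →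
      u ≠ w → Wit G D u w := by
    intro u w hul hwl htuK htwK huw
    by_cases htt : sig G u = sig G w
    · by_cases huD : u ∈ D
      · have h1 : u = lc G v := hleafD u hul huD
        have hwD : w ∉ D := fun h => huw (h1.trans (hleafD w hwl h).symm)
        refine ⟨w, hwD, Or.inr ⟨self_mem_cN w, ?_⟩⟩
        exact leaf_notin_cN_leaf hwl (Ne.symm huw)
          (fun h => (hKleaf _ htwK) (by rw [h]; exact hul))
      · refine ⟨u, huD, Or.inl ⟨self_mem_cN u, ?_⟩⟩
        exact leaf_notin_cN_leaf hul huw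
          (fun h => (hKleaf _ htuK) (by rw [h]; exact hwl))
    · by_cases htD : sig G u ∈ D
      · refine ⟨u, ?_, Or.inl ⟨self_mem_cN u, ?_⟩⟩
        · intro h
          have he : u = lc G v := hleafD u hul h
          have : sig G u = v := by rw [he, sig_lc hvS]
          rw [this] at htD
          exact hvD htD
        · exact leaf_notin_cN_leaf hul huw
            (fun h => (hKleaf _ htuK) (by rw [h]; exact hwl))
      · refine ⟨sig G u, htD, Or.inl ⟨mem_cN.mpr (Or.inr (adj_sig hul)), ?_⟩⟩
        intro h
        rcases mem_cN.mp h with h1 | h1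
        · exact (hKleaf _ htuK) (h1 ▸ hwl)
        · exact htt ((eq_sig_of_adj hwl h1.symm).symm ▸ rfl)
  have hsep : ∀ u w, u ≠ w → Wit G D u w := by
    intro u w huw
    rcases hA u with huK | ⟨hul, husK⟩
    · rcases hA w with hwK | ⟨hwl, hwsK⟩
      · exact KKcase u w huK hwK huw
      · exact mixed u w huK hwl hwsK huw
    · rcases hA w with hwK | ⟨hwl, hwsK⟩
      · exact (mixed w u hwK hul husK (Ne.symm huw)).symm
      · exact LLcase u w hul hwl husK hwsK huw
  have hdom : ∀ w, ∃ y, y ∈ closedNbr G w ∧ y ∉ D := by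
    intro w
    rcases hA w with hwK | ⟨hwl, hwsK⟩
    · exact ⟨v, (hcNK w hwK v).mpr (Or.inl hvK), hvD⟩
    · by_cases hwD : w ∈ D
      · have h1 : w = lc G v := hleafD w hwl hwD
        have h2 : sig G w = v := by rw [h1, sig_lc hvS]
        refine ⟨v, ?_, hvD⟩
        have := mem_cN.mpr (Or.inr (adj_sig hwl))
        rwa [h2] at this
      · exact ⟨w, self_mem_cN w, hwD⟩
  have hcount : (supports G).ncard = D.ncard + 1 := by
    have hlcnotin : lc G v ∉ K \ {v, x₀} := fun h => (hKleaf _ h.1) hlcvl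
    have e1 : D.ncard = (K \ {v, x₀}).ncard + 1 :=
      Set.ncard_insert_of_notMem hlcnotin (Set.toFinite _)
    have e2 : K \ ({v, x₀} : Set V) = (K \ {v}) \ {x₀} := by
      rw [Set.diff_diff]
      rfl
    have hx₀mem : x₀ ∈ K \ {v} := ⟨hx₀K, by simp [hx₀v]⟩
    have e3 : ((K \ {v}) \ {x₀}).ncard + 1 = (K \ {v}).ncard :=
      Set.ncard_diff_singleton_add_one hx₀mem (Set.toFinite _)
    have e4 : (K \ {v}).ncard + 1 = K.ncard :=
      Set.ncard_diff_singleton_add_one hvK (Set.toFinite _)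
    rw [hSK]
    rw [e2] at e1
    omega
  exact ⟨D, hcount, hdom, hsep⟩


lemma main_construct (hconn : G.Connected) (hid : Identifiable G) (hn : 3 ≤ Fintype.card V)
    (h2 : 2 ≤ (supports G).ncard) :
    ∃ D : Set V, (supports G).ncard = D.ncard + 1 ∧
      (∀ w, ∃ y, y ∈ closedNbr G w ∧ y ∉ D) ∧ (∀ u w, u ≠ w → Wit G D u w) := by
  by_cases hsp : ∃ v, v ∈ supports G ∧ fs G v \ {v} ⊆ Xs G
  · obtain ⟨v, hvS, hvsub⟩ := hsp
    by_cases hvX : v ∈ Xs G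
    · exfalso
      obtain ⟨r, hrl, hrX, hrf, hrv⟩ := X_elim hconn hn hvX
      have : r ∈ fs G v := by
        have : r ∈ fs G r := self_mem_fs hrl
        rwa [hrf] at this
      exact hrX (hvsub ⟨this, hrv⟩)
    · exact special_case hconn hn h2 hvS hvX hvsub
  · push_neg at hsp
    have hns : ∀ t ∈ supports G, t ∉ Xs G → ¬(fs G t \ {t} ⊆ Xs G) := by
      intro t ht _ hc
      exact hsp t ht hc
    have hcard := Dful_ncard (G := G) hconn hn
    have hne : (Dful G).Nonempty := Set.nonempty_of_ncard_ne_zero (by omega)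
    obtain ⟨d₀, hd₀⟩ := hne
    refine ⟨Dful G \ {d₀}, ?_, ?_, ?_⟩
    · rw [← hcard, ← Set.ncard_diff_singleton_add_one hd₀ (Set.toFinite _)]
    · intro w
      obtain ⟨y, hy1, hy2⟩ := dom_Dful hconn hn w
      exact ⟨y, hy1, fun h => hy2 h.1⟩
    · intro u w huw
      apply Wit.mono Set.diff_subset
      by_cases hul : u ∈ leaves G
      · by_cases hwl : w ∈ leaves G
        · exact LLaux hconn hn hul hwl huw
        · exact LNaux hconn hn hns hul hwl huw
      · by_cases hwl : w ∈ leaves G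
        · exact (LNaux hconn hn hns hwl hul (Ne.symm huw)).symm
        · exact NNaux hconn hid hn hul hwl huw

theorem final_thm {V : Type*} [Fintype V] (G : SimpleGraph V)
    (hconn : G.Connected) (hid : Identifiable G) (hn : 3 ≤ Fintype.card V) :
    ∃ C : Set V, IsIdCode G C ∧
      C.ncard ≤ Fintype.card V - (supports G).ncard + 1 := by
  classical
  have hSle : (supports G).ncard ≤ Fintype.card V := by
    have := Set.ncard_le_ncard (Set.subset_univ (supports G)) (Set.toFinite _)
    rwa [Set.ncard_univ, Nat.card_eq_fintype_card] at this
  by_cases h2 : 2 ≤ (supports G).ncard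
  · obtain ⟨D, hDc, hdom, hsep⟩ := main_construct hconn hid hn h2
    refine ⟨Set.univ \ D, ⟨?_, ?_⟩, ?_⟩
    · intro v
      obtain ⟨y, hy1, hy2⟩ := hdom v
      exact ⟨y, hy1, Set.mem_univ y, hy2⟩
    · intro u v h
      by_contra huv
      obtain ⟨y, hyD, hy⟩ := hsep u v huv
      rcases hy with ⟨h1, h2'⟩ | ⟨h1, h2'⟩
      · have : y ∈ closedNbr G u ∩ (Set.univ \ D) := ⟨h1, Set.mem_univ y, hyD⟩
        rw [h] at this
        exact h2' this.1
      · have : y ∈ closedNbr G v ∩ (Set.univ \ D) := ⟨h1, Set.mem_univ y, hyD⟩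
        rw [← h] at this
        exact h2' this.1
    · have hD : D ⊆ Set.univ := Set.subset_univ D
      have := Set.ncard_diff hD (Set.toFinite _)
      rw [this, Set.ncard_univ, Nat.card_eq_fintype_card]
      have hDle : D.ncard ≤ Fintype.card V := by
        have := Set.ncard_le_ncard hD (Set.toFinite _)
        rwa [Set.ncard_univ, Nat.card_eq_fintype_card] at this
      omega
  · refine ⟨Set.univ, ⟨?_, ?_⟩, ?_⟩
    · intro v
      exact ⟨v, self_mem_cN v, Set.mem_univ v⟩
    · intro u v h
      apply hid
      rwa [Set.inter_univ, Set.inter_univ] at h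
    · rw [Set.ncard_univ, Nat.card_eq_fintype_card]
      omega

end StmtAux


theorem stmt_2 {V : Type*} [Fintype V] (G : SimpleGraph V)
    (hconn : G.Connected) (hid : Identifiable G) (hn : 3 ≤ Fintype.card V) :
    ∃ C : Set V, IsIdCode G C ∧
      C.ncard ≤ Fintype.card V - (supports G).ncard + 1 := by
  exact StmtAux.final_thm G hconn hid hn
end

section
/- Let G be a connected bipartite graph on n ≥ 3 vertices that has no twins of degree 2 or greater (i.e., no two distinct vertices of degree at least 2 share the same open neighbourhood or the same closed neighbourhood). Then γ^ID(G) ≤ (n + ℓ(G))/2, where ℓ(G) is the number of leaves of G. -/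
open SimpleGraph

lemma walk_closed {V : Type*} (G : SimpleGraph V) (S : Set V)
    (hS : ∀ x ∈ S, ∀ y, G.Adj x y → y ∈ S) {u z : V} (p : G.Walk u z) (hu : u ∈ S) : z ∈ S := by
  induction p with
  | nil => exact hu
  | cons h q ih => exact ih (hS _ hu _ h)

lemma side_code {V : Type*} [Fintype V] (G : SimpleGraph V)
    (hconn : G.Connected) (hn : 3 ≤ Fintype.card V)
    (htwin : ∀ u v : V, u ≠ v → 2 ≤ (G.neighborSet u).ncard →
      2 ≤ (G.neighborSet v).ncard →
      G.neighborSet u ≠ G.neighborSet v ∧ closedNbr G u ≠ closedNbr G v)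
    (A : Set V) (hA : ∀ u v, G.Adj u v → (u ∈ A ↔ v ∉ A)) :
    ∃ C : Set V, IsIdCode G C ∧ C.ncard ≤ A.ncard + (leaves G \ A).ncard := by
  classical
  -- every vertex has a neighbour
  have hnbr : ∀ v : V, ∃ y, G.Adj v y := by
    intro v
    obtain ⟨w, hw⟩ := Fintype.exists_ne_of_one_lt_card (by omega) v
    obtain ⟨p⟩ := hconn v w
    cases p with
    | nil => exact absurd rfl hw.symm
    | cons h q => exact ⟨_, h⟩
  have hdeg1 : ∀ v : V, 1 ≤ (G.neighborSet v).ncard := by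
    intro v
    obtain ⟨y, hy⟩ := hnbr v
    have : 0 < (G.neighborSet v).ncard := (Set.ncard_pos (Set.toFinite _)).2 ⟨y, hy⟩
    omega
  have hdeg2 : ∀ v : V, ¬ IsLeaf G v → 2 ≤ (G.neighborSet v).ncard := by
    intro v hv
    have := hdeg1 v
    unfold IsLeaf at hv
    omega
  -- support of a leaf
  let s : V → V := fun w => if h : ∃ x, G.neighborSet w = {x} then h.choose else w
  have hs : ∀ w, IsLeaf G w → G.neighborSet w = {s w} := by
    intro w hw
    have h : ∃ x, G.neighborSet w = {x} := Set.ncard_eq_one.1 hw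
    simp only [s, dif_pos h]
    exact h.choose_spec
  have hsadj : ∀ w, IsLeaf G w → G.Adj w (s w) := by
    intro w hw
    have := hs w hw
    have : s w ∈ G.neighborSet w := by rw [this]; rfl
    exact this
  -- choice of a non-leaf neighbour
  let f : V → V := fun v => if h : ∃ y, G.Adj v y ∧ ¬ IsLeaf G y then h.choose else v
  have hf : ∀ v, (∃ y, G.Adj v y ∧ ¬ IsLeaf G y) → G.Adj v (f v) ∧ ¬ IsLeaf G (f v) := by
    intro v h
    simp only [f, dif_pos h]
    exact h.choose_spec
  set L : Set V := leaves G \ A with hLdef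
  set Lone : Set V := {w | w ∈ L ∧ ∀ w', w' ∈ L → G.Adj (s w) w' → w' = w} with hLonedef
  -- a lone leaf's support has a non-leaf neighbour
  have hlone : ∀ w ∈ Lone, ∃ y, G.Adj (s w) y ∧ ¬ IsLeaf G y := by
    intro w hw
    by_contra hcon
    push_neg at hcon
    have hwleaf : IsLeaf G w := hw.1.1
    have hwA : w ∉ A := hw.1.2
    have hadj : G.Adj w (s w) := hsadj w hwleaf
    have hsA : s w ∈ A := by
      by_contra hsA
      exact hwA ((hA w (s w) hadj).2 hsA)
    -- every neighbour of s w equals w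
    have hNs : G.neighborSet (s w) = {w} := by
      ext y
      simp only [Set.mem_singleton_iff, mem_neighborSet]
      constructor
      · intro hy
        have hyleaf : IsLeaf G y := hcon y hy
        have hyA : y ∉ A := (hA (s w) y hy).1 hsA
        exact hw.2 y ⟨hyleaf, hyA⟩ hy
      · intro hy; subst hy; exact hadj.symm
    have hNw : G.neighborSet w = {s w} := hs w hwleaf
    -- {w, s w} is closed under adjacency
    have hclosed : ∀ x ∈ ({w, s w} : Set V), ∀ y, G.Adj x y → y ∈ ({w, s w} : Set V) := by
      intro x hx y hy
      rcases hx with hx | hx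
      · subst hx
        have hmem : y ∈ G.neighborSet x := hy
        rw [hNw] at hmem; right; exact hmem
      · have hx' : x = s w := hx
        subst hx'
        have hmem : y ∈ G.neighborSet (s w) := hy
        rw [hNs] at hmem; left; exact hmem
    have huniv : (Set.univ : Set V) ⊆ {w, s w} := by
      intro z _
      obtain ⟨p⟩ := hconn w z
      exact walk_closed G _ hclosed p (Or.inl rfl)
    have : Fintype.card V ≤ 2 := by
      calc Fintype.card V = (Set.univ : Set V).ncard := by
            rw [Set.ncard_univ, Nat.card_eq_fintype_card]
        _ ≤ ({w, s w} : Set V).ncard := Set.ncard_le_ncard huniv (Set.toFinite _)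
        _ ≤ 2 := by
            have := Set.ncard_insert_le w ({s w} : Set V)
            simpa using this
    omega
  -- basic adjacency/bipartition facts
  have hadjA : ∀ {u v : V}, G.Adj u v → u ∉ A → v ∈ A := by
    intro u v h hu
    by_contra hv
    exact hu ((hA u v h).2 hv)
  have hadjA' : ∀ {u v : V}, G.Adj u v → u ∈ A → v ∉ A := fun h hu => (hA _ _ h).1 hu
  have hsA : ∀ w ∈ L, s w ∈ A := by
    intro w hw
    exact hadjA (hsadj w hw.1) hw.2
  set U : Set V := (fun w => f (s w)) '' Lone with hUdef
  set C : Set V := A ∪ (L \ Lone) ∪ U with hCdef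
  have hUspec : ∀ x ∈ U, x ∉ A ∧ ¬ IsLeaf G x := by
    rintro x ⟨w, hwLone, rfl⟩
    obtain ⟨hadjf, hnleaf⟩ := hf (s w) (hlone w hwLone)
    exact ⟨hadjA' hadjf (hsA w hwLone.1), hnleaf⟩
  have hAC : A ⊆ C := fun x hx => Or.inl (Or.inl hx)
  have hLC : L \ Lone ⊆ C := fun x hx => Or.inl (Or.inr hx)
  have hUC : U ⊆ C := fun x hx => Or.inr hx
  -- membership of the code intersected with the sides
  have hcsA : ∀ v ∈ A, closedNbr G v ∩ C ∩ A = {v} := by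
    intro v hv
    ext x
    simp only [Set.mem_inter_iff, Set.mem_singleton_iff]
    constructor
    · rintro ⟨⟨hx1, _⟩, hxA⟩
      rcases hx1 with hx1 | hx1
      · exact hx1
      · exact absurd hxA (hadjA' hx1 hv)
    · rintro rfl
      exact ⟨⟨Or.inl rfl, hAC hv⟩, hv⟩
  have hcsB : ∀ v ∉ A, closedNbr G v ∩ C ∩ A = G.neighborSet v := by
    intro v hv
    ext x
    simp only [Set.mem_inter_iff]
    constructor
    · rintro ⟨⟨hx1, _⟩, hxA⟩
      rcases hx1 with rfl | hx1
      · exact absurd hxA hv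
      · exact hx1
    · intro hx
      have hxA : x ∈ A := hadjA hx hv
      exact ⟨⟨Or.inr hx, hAC hxA⟩, hxA⟩
  have hcsBc : ∀ v ∉ A, ∀ x, x ∈ closedNbr G v ∩ C → x ∉ A → x = v := by
    intro v hv x hx hxA
    rcases hx.1 with rfl | hx1
    · rfl
    · exact absurd (hadjA hx1 hv) hxA
  have hcsBnC : ∀ v, v ∉ A → v ∉ C → closedNbr G v ∩ C = G.neighborSet v := by
    intro v hvA hvC
    ext x
    simp only [Set.mem_inter_iff]
    constructor
    · rintro ⟨hx1, hxC⟩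
      rcases hx1 with rfl | hx1
      · exact absurd hxC hvC
      · exact hx1
    · intro hx
      exact ⟨Or.inr hx, hAC (hadjA hx hvA)⟩
  -- the asymmetric case of injectivity
  have asym : ∀ u v, u ∈ A → v ∉ A → closedNbr G u ∩ C = closedNbr G v ∩ C → False := by
    intro u v huA hvA h
    have hNv : G.neighborSet v = {u} := by
      rw [← hcsB v hvA, ← h, hcsA u huA]
    have hvleaf : IsLeaf G v := by
      rw [IsLeaf, hNv]
      exact Set.ncard_singleton u
    have hsv : s v = u := by
      have h1 : ({s v} : Set V) = {u} := by rw [← hs v hvleaf, hNv]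
      exact Set.singleton_eq_singleton_iff.1 h1
    have hvL : v ∈ L := ⟨hvleaf, hvA⟩
    have hadjvu : G.Adj v u := by
      have : u ∈ G.neighborSet v := by rw [hNv]; rfl
      exact this
    by_cases hvLone : v ∈ Lone
    · have hvC : v ∉ C := by
        rintro (hv | hv)
        · rcases hv with hv | hv
          · exact hvA hv
          · exact hv.2 hvLone
        · exact (hUspec v hv).2 hvleaf
      have hcsv : closedNbr G v ∩ C = {u} := by rw [hcsBnC v hvA hvC, hNv]
      obtain ⟨hadjf, hnleaf⟩ := hf (s v) (hlone v hvLone)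
      have hfU : f (s v) ∈ U := ⟨v, hvLone, rfl⟩
      have hmem : f (s v) ∈ closedNbr G u ∩ C := by
        refine ⟨Or.inr ?_, hUC hfU⟩
        show G.Adj u (f (s v))
        rw [← hsv]
        exact hadjf
      rw [h, hcsv] at hmem
      have : G.Adj u (f (s v)) := by rw [← hsv]; exact hf (s v) (hlone v hvLone) |>.1
      rw [Set.mem_singleton_iff] at hmem
      exact G.irrefl (hmem ▸ this)
    · have hvex : ∃ w', w' ∈ L ∧ G.Adj (s v) w' ∧ w' ≠ v := by
        by_contra hcon
        push_neg at hcon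
        exact hvLone ⟨hvL, fun w' hw' hadj => hcon w' hw' hadj⟩
      obtain ⟨w', hw'L, hw'adj, hw'ne⟩ := hvex
      have hadjuw' : G.Adj u w' := by rw [← hsv]; exact hw'adj
      have hsw' : s w' = u := by
        have : u ∈ G.neighborSet w' := hadjuw'.symm
        rw [hs w' hw'L.1] at this
        exact this.symm
      have hw'Lone : w' ∉ Lone := by
        intro hL
        exact hw'ne (hL.2 v hvL (by rw [hsw']; exact hadjvu.symm)).symm
      have hw'C : w' ∈ C := hLC ⟨hw'L, hw'Lone⟩
      have h1 : w' ∈ closedNbr G u ∩ C := ⟨Or.inr hadjuw', hw'C⟩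
      rw [h] at h1
      exact hw'ne (hcsBc v hvA w' h1 hw'L.2)
  refine ⟨C, ⟨?_, ?_⟩, ?_⟩
  · -- nonempty
    intro v
    by_cases hv : v ∈ A
    · exact ⟨v, Or.inl rfl, hAC hv⟩
    · obtain ⟨y, hy⟩ := hnbr v
      exact ⟨y, Or.inr hy, hAC (hadjA hy hv)⟩
  · -- injective
    intro u v h
    by_cases huA : u ∈ A <;> by_cases hvA : v ∈ A
    · have h1 : ({u} : Set V) = {v} := by rw [← hcsA u huA, ← hcsA v hvA, h]
      exact Set.singleton_eq_singleton_iff.1 h1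
    · exact absurd h (fun hh => asym u v huA hvA hh)
    · exact absurd h.symm (fun hh => asym v u hvA huA hh)
    · by_cases huC : u ∈ C
      · have hmem : u ∈ closedNbr G v ∩ C := h ▸ ⟨Or.inl rfl, huC⟩
        exact hcsBc v hvA u hmem huA
      · by_cases hvC : v ∈ C
        · have hmem : v ∈ closedNbr G u ∩ C := h.symm ▸ ⟨Or.inl rfl, hvC⟩
          exact (hcsBc u huA v hmem hvA).symm
        · have hNN : G.neighborSet u = G.neighborSet v := by
            rw [← hcsBnC u huA huC, ← hcsBnC v hvA hvC, h]
          by_cases hul : IsLeaf G u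
          · have huL : u ∈ L := ⟨hul, huA⟩
            have huLone : u ∈ Lone := by
              by_contra hcon
              exact huC (hLC ⟨huL, hcon⟩)
            have hNv : G.neighborSet v = {s u} := by rw [← hNN, hs u hul]
            have hvleaf : IsLeaf G v := by rw [IsLeaf, hNv]; exact Set.ncard_singleton _
            have hadj : G.Adj (s u) v := by
              have : s u ∈ G.neighborSet v := by rw [hNv]; rfl
              exact this.symm
            exact (huLone.2 v ⟨hvleaf, hvA⟩ hadj).symm
          · by_cases hvl : IsLeaf G v
            · have hvL : v ∈ L := ⟨hvl, hvA⟩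
              have hvLone : v ∈ Lone := by
                by_contra hcon
                exact hvC (hLC ⟨hvL, hcon⟩)
              have hNu : G.neighborSet u = {s v} := by rw [hNN, hs v hvl]
              have huleaf : IsLeaf G u := by rw [IsLeaf, hNu]; exact Set.ncard_singleton _
              exact absurd huleaf hul
            · by_contra hne
              exact (htwin u v hne (hdeg2 u hul) (hdeg2 v hvl)).1 hNN
  · -- cardinality
    have h1 : C.ncard ≤ (A ∪ (L \ Lone)).ncard + U.ncard := Set.ncard_union_le _ _
    have h2 : (A ∪ (L \ Lone)).ncard ≤ A.ncard + (L \ Lone).ncard := Set.ncard_union_le _ _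
    have h3 : U.ncard ≤ Lone.ncard := Set.ncard_image_le (Set.toFinite _)
    have h4 : (L \ Lone).ncard + Lone.ncard = L.ncard :=
      Set.ncard_diff_add_ncard_of_subset (fun w hw => hw.1) (Set.toFinite _)
    omega

theorem stmt_3 {V : Type*} [Fintype V] (G : SimpleGraph V)
    (hconn : G.Connected) (hbip : G.Colorable 2) (hn : 3 ≤ Fintype.card V)
    (htwin : ∀ u v : V, u ≠ v → 2 ≤ (G.neighborSet u).ncard →
      2 ≤ (G.neighborSet v).ncard →
      G.neighborSet u ≠ G.neighborSet v ∧ closedNbr G u ≠ closedNbr G v) :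
    ∃ C : Set V, IsIdCode G C ∧
      (C.ncard : ℝ) ≤ (Fintype.card V + (leaves G).ncard) / 2 := by
  classical
  obtain ⟨c⟩ := hbip
  set A : Set V := {v | c v = 0} with hAdef
  have hA : ∀ u v, G.Adj u v → (u ∈ A ↔ v ∉ A) := by
    intro u v h
    have hne : c u ≠ c v := c.valid h
    simp only [hAdef, Set.mem_setOf_eq]
    have h2 : ∀ x : Fin 2, x = 0 ∨ x = 1 := by decide
    constructor
    · intro hu hv
      exact hne (by rw [hu, hv])
    · intro hv
      rcases h2 (c u) with h0 | h1
      · exact h0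
      · rcases h2 (c v) with h0 | h1'
        · exact absurd h0 hv
        · exact absurd (h1.trans h1'.symm) hne
  have hA' : ∀ u v, G.Adj u v → (u ∈ Aᶜ ↔ v ∉ Aᶜ) := by
    intro u v h
    have h1 := hA u v h
    have h2 := hA v u h.symm
    simp only [Set.mem_compl_iff]
    tauto
  obtain ⟨C0, hC0, hc0⟩ := side_code G hconn hn htwin A hA
  obtain ⟨C1, hC1, hc1⟩ := side_code G hconn hn htwin Aᶜ hA'
  have hAcompl : A.ncard + Aᶜ.ncard = Fintype.card V := by
    rw [Set.ncard_add_ncard_compl, Nat.card_eq_fintype_card]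
  have hLsplit : (leaves G \ A).ncard + (leaves G \ Aᶜ).ncard = (leaves G).ncard := by
    have h1 : leaves G \ Aᶜ = leaves G ∩ A := by ext x; simp
    rw [h1, add_comm]
    exact Set.ncard_inter_add_ncard_diff_eq_ncard _ _ (Set.toFinite _)
  have key : C0.ncard + C1.ncard ≤ Fintype.card V + (leaves G).ncard := by omega
  rcases le_total C0.ncard C1.ncard with hle | hle
  · refine ⟨C0, hC0, ?_⟩
    rw [le_div_iff₀ (by norm_num : (0:ℝ) < 2)]
    have : C0.ncard * 2 ≤ Fintype.card V + (leaves G).ncard := by omega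
    exact_mod_cast this
  · refine ⟨C1, hC1, ?_⟩
    rw [le_div_iff₀ (by norm_num : (0:ℝ) < 2)]
    have : C1.ncard * 2 ≤ Fintype.card V + (leaves G).ncard := by omega
    exact_mod_cast this
end

section
/- Let G be a connected bipartite graph on n ≥ 5 vertices with no twins of degree 2 or greater. Then γ^ID(G) ≤ min{(n + ℓ(G))/2, n − s(G)}, where ℓ(G) is the number of leaves and s(G) the number of support vertices. -/
open SimpleGraph

open Set

namespace IdAux

variable {V : Type*} [Fintype V] {G : SimpleGraph V}

lemma mem_cn {u v : V} : u ∈ closedNbr G v ↔ u = v ∨ G.Adj v u := by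
  simp [closedNbr, SimpleGraph.mem_neighborSet]

lemma self_mem_cn (v : V) : v ∈ closedNbr G v := mem_cn.mpr (Or.inl rfl)

lemma adj_mem_cn {u v : V} (h : G.Adj v u) : u ∈ closedNbr G v := mem_cn.mpr (Or.inr h)

lemma card_le_of_closed (hconn : G.Connected) (T : Set V)
    (hT : ∀ x ∈ T, ∀ y, G.Adj x y → y ∈ T) {t : V} (ht : t ∈ T) :
    Fintype.card V ≤ T.ncard := by
  have hall : ∀ v, v ∈ T := by
    have key : ∀ (a b : V), G.Walk a b → a ∈ T → b ∈ T := by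
      intro a b w
      induction w with
      | nil => exact id
      | cons h p ih => exact fun ha => ih (hT _ ha _ h)
    intro v
    exact (hconn.preconnected t v).elim fun w => key t v w ht
  have : (Set.univ : Set V) ⊆ T := fun v _ => hall v
  calc Fintype.card V = (Set.univ : Set V).ncard := by
        rw [Set.ncard_univ, Nat.card_eq_fintype_card]
    _ ≤ T.ncard := Set.ncard_le_ncard this (Set.toFinite _)

lemma exists_adj (hconn : G.Connected) (h2 : 2 ≤ Fintype.card V) (v : V) :
    ∃ u, G.Adj v u := by
  obtain ⟨u, hu⟩ := Fintype.exists_ne_of_one_lt_card (by omega) v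
  obtain ⟨w⟩ := hconn.preconnected v u
  cases w with
  | nil => exact absurd rfl hu
  | cons h _ => exact ⟨_, h⟩

lemma leaf_nbhd {v : V} (h : IsLeaf G v) : ∃ u, G.neighborSet v = {u} :=
  Set.ncard_eq_one.mp h

lemma leaf_unique {v x y : V} (h : IsLeaf G v) (hx : G.Adj v x) (hy : G.Adj v y) : x = y := by
  obtain ⟨u, hu⟩ := leaf_nbhd h
  have h1 : x ∈ ({u} : Set V) := hu ▸ hx
  have h2 : y ∈ ({u} : Set V) := hu ▸ hy
  simp only [Set.mem_singleton_iff] at h1 h2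
  rw [h1, h2]

lemma no_adj_leaves (hconn : G.Connected) (hn : 3 ≤ Fintype.card V)
    {u v : V} (hu : IsLeaf G u) (hv : IsLeaf G v) : ¬ G.Adj u v := by
  intro hadj
  have hT : ∀ x ∈ ({u, v} : Set V), ∀ y, G.Adj x y → y ∈ ({u, v} : Set V) := by
    rintro x (rfl | rfl) y hy
    · exact Or.inr (leaf_unique hu hy hadj)
    · exact Or.inl (leaf_unique hv hy hadj.symm)
  have := card_le_of_closed hconn _ hT (Set.mem_insert u {v})
  have h2 : ({u, v} : Set V).ncard ≤ 2 := by
    apply le_trans (Set.ncard_insert_le _ _)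
    simp
  omega

lemma two_le_deg (hconn : G.Connected) (hn : 2 ≤ Fintype.card V)
    {v : V} (hv : ¬ IsLeaf G v) : 2 ≤ (G.neighborSet v).ncard := by
  obtain ⟨u, hu⟩ := exists_adj hconn hn v
  have h1 : 1 ≤ (G.neighborSet v).ncard := by
    have : (G.neighborSet v).Nonempty := ⟨u, hu⟩
    have := this.ncard_pos (Set.toFinite _)
    omega
  have : (G.neighborSet v).ncard ≠ 1 := hv
  omega

lemma support_not_leaf (hconn : G.Connected) (hn : 3 ≤ Fintype.card V)
    {w : V} (hw : w ∈ supports G) : ¬ IsLeaf G w := by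
  obtain ⟨u, hu, hadj⟩ := hw
  exact fun hlw => no_adj_leaves hconn hn hlw hu hadj

end IdAux

namespace IdAux

variable {V : Type*} [Fintype V] {G : SimpleGraph V}

lemma ncard3 (x y z : V) : ({x, y, z} : Set V).ncard ≤ 3 := by
  apply le_trans (Set.ncard_insert_le _ _)
  have : ({y, z} : Set V).ncard ≤ 2 := by
    apply le_trans (Set.ncard_insert_le _ _); simp
  omega

lemma ncard4 (w x y z : V) : ({w, x, y, z} : Set V).ncard ≤ 4 := by
  apply le_trans (Set.ncard_insert_le _ _)
  have := ncard3 x y z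
  omega

lemma codeA (hconn : G.Connected) (hn : 5 ≤ Fintype.card V)
    (htf : ∀ u v x : V, G.Adj u v → G.Adj u x → G.Adj v x → False) :
    ∃ C : Set V, IsIdCode G C ∧ C.ncard + (supports G).ncard = Fintype.card V := by
  classical
  have hVne : Nonempty V := Fintype.card_pos_iff.mp (by omega)
  -- the support of each leaf
  have hsptE : ∀ v : V, ∃ u : V, IsLeaf G v → G.neighborSet v = {u} := by
    intro v
    by_cases hv : IsLeaf G v
    · obtain ⟨u, hu⟩ := leaf_nbhd hv; exact ⟨u, fun _ => hu⟩
    · exact ⟨Classical.arbitrary V, fun h => absurd h hv⟩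
  choose spt hspt using hsptE
  have hsptA : ∀ v : V, IsLeaf G v → G.Adj v (spt v) := by
    intro v hv
    have : spt v ∈ G.neighborSet v := (hspt v hv) ▸ rfl
    exact this
  have hsptU : ∀ v x : V, IsLeaf G v → G.Adj v x → x = spt v := by
    intro v x hv hx
    have : x ∈ ({spt v} : Set V) := (hspt v hv) ▸ hx
    exact this
  have hsptS : ∀ v : V, IsLeaf G v → spt v ∈ supports G := fun v hv =>
    ⟨v, hv, (hsptA v hv).symm⟩
  -- a chosen leaf of each support
  have hgE : ∀ w : V, ∃ l : V, w ∈ supports G → IsLeaf G l ∧ G.Adj w l := by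
    intro w
    by_cases hw : w ∈ supports G
    · obtain ⟨l, hl, ha⟩ := hw; exact ⟨l, fun _ => ⟨hl, ha⟩⟩
    · exact ⟨Classical.arbitrary V, fun h => absurd h hw⟩
  choose g hg using hgE
  have hgspt : ∀ w : V, w ∈ supports G → spt (g w) = w := by
    intro w hw
    exact (hsptU (g w) w (hg w hw).1 (hg w hw).2.symm).symm
  set L₀ : Set V := g '' supports G with hL₀def
  have hL0 : ∀ x ∈ L₀, IsLeaf G x ∧ spt x ∈ supports G ∧ x = g (spt x) := by
    rintro x ⟨w, hw, rfl⟩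
    refine ⟨(hg w hw).1, ?_, ?_⟩
    · rw [hgspt w hw]; exact hw
    · rw [hgspt w hw]
  have hL0nb : ∀ u x : V, G.Adj u x → x ∈ L₀ → u ∈ supports G ∧ x = g u := by
    intro u x hadj hx
    obtain ⟨hxl, hxs, hxg⟩ := hL0 x hx
    have : u = spt x := hsptU x u hxl hadj.symm
    subst this
    exact ⟨hxs, hxg⟩
  refine ⟨L₀ᶜ, ⟨?_, ?_⟩, ?_⟩
  · -- nonempty
    intro v
    by_cases hv : IsLeaf G v
    · refine ⟨spt v, adj_mem_cn (hsptA v hv), ?_⟩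
      intro hmem
      exact support_not_leaf hconn (by omega) (hsptS v hv) (hL0 _ hmem).1
    · exact ⟨v, self_mem_cn v, fun hmem => hv (hL0 _ hmem).1⟩
  · -- identifying
    have keyLL : ∀ a b : V, IsLeaf G a → IsLeaf G b → a ≠ b →
        closedNbr G a ∩ L₀ᶜ = closedNbr G b ∩ L₀ᶜ → False := by
      intro a b ha hb hne h
      by_cases hb0 : b ∈ L₀
      · by_cases ha0 : a ∈ L₀
        · -- both chosen: witness spt a
          have hw : spt a ∈ closedNbr G a ∩ L₀ᶜ :=
            ⟨adj_mem_cn (hsptA a ha),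
             fun hm => support_not_leaf hconn (by omega) (hsptS a ha) (hL0 _ hm).1⟩
          rw [h] at hw
          rcases mem_cn.mp hw.1 with heq | hadj
          · exact support_not_leaf hconn (by omega) (hsptS a ha) (heq ▸ hb)
          · have : spt a = spt b := hsptU b (spt a) hb hadj
            have : a = b := by
              rw [(hL0 a ha0).2.2, (hL0 b hb0).2.2, this]
            exact hne this
        · -- a not chosen: witness a
          have hw : a ∈ closedNbr G a ∩ L₀ᶜ := ⟨self_mem_cn a, ha0⟩
          rw [h] at hw
          rcases mem_cn.mp hw.1 with heq | hadj
          · exact hne heq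
          · exact no_adj_leaves hconn (by omega) hb ha hadj
      · -- b not chosen: witness b
        have hw : b ∈ closedNbr G b ∩ L₀ᶜ := ⟨self_mem_cn b, hb0⟩
        rw [← h] at hw
        rcases mem_cn.mp hw.1 with heq | hadj
        · exact hne heq.symm
        · exact no_adj_leaves hconn (by omega) ha hb hadj
    have keyLI : ∀ a b : V, IsLeaf G a → ¬ IsLeaf G b → a ≠ b →
        closedNbr G a ∩ L₀ᶜ = closedNbr G b ∩ L₀ᶜ → False := by
      intro a b ha hb hne h
      by_cases hbw : b = spt a
      · -- b is the support of a
        subst hbw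
        have hwS : spt a ∈ supports G := hsptS a ha
        by_cases hsub : G.neighborSet (spt a) ⊆ {a, g (spt a)}
        · -- small component contradiction
          have hT : ∀ x ∈ ({spt a, a, g (spt a)} : Set V), ∀ y, G.Adj x y →
              y ∈ ({spt a, a, g (spt a)} : Set V) := by
            rintro x (rfl | rfl | rfl) y hy
            · rcases hsub hy with h1 | h1
              · exact Or.inr (Or.inl h1)
              · exact Or.inr (Or.inr h1)
            · left; exact (hsptU x y ha hy).symm ▸ rfl
            · left
              have := hsptU (g (spt a)) y (hg _ hwS).1 hy
              rw [this, hgspt _ hwS]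
          have hcard := card_le_of_closed hconn _ hT
            (Set.mem_insert (spt a) {a, g (spt a)})
          have := ncard3 (spt a) a (g (spt a))
          omega
        · obtain ⟨x, hx, hxn⟩ := Set.not_subset.mp hsub
          have hx0 : x ∉ L₀ := by
            intro hm
            have := (hL0nb (spt a) x hx hm).2
            exact hxn (Or.inr (by simpa using this))
          have hw : x ∈ closedNbr G (spt a) ∩ L₀ᶜ := ⟨adj_mem_cn hx, hx0⟩
          rw [← h] at hw
          rcases mem_cn.mp hw.1 with heq | hadj
          · exact hxn (Or.inl (by simpa using heq))
          · have : x = spt a := hsptU a x ha hadj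
            exact (G.ne_of_adj hx).symm this
      · -- b is not the support of a: witness b
        have hw : b ∈ closedNbr G b ∩ L₀ᶜ :=
          ⟨self_mem_cn b, fun hm => hb (hL0 _ hm).1⟩
        rw [← h] at hw
        rcases mem_cn.mp hw.1 with heq | hadj
        · exact hne heq.symm
        · exact hbw (hsptU a b ha hadj)
    have keyII : ∀ a b : V, ¬ IsLeaf G a → ¬ IsLeaf G b → a ≠ b →
        closedNbr G a ∩ L₀ᶜ = closedNbr G b ∩ L₀ᶜ → False := by
      intro a b ha hb hne h
      by_cases hadj : G.Adj a b
      · -- adjacent interior vertices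
        have claim : ∀ p q : V, ¬ IsLeaf G p → G.Adj p q →
            closedNbr G p ∩ L₀ᶜ = closedNbr G q ∩ L₀ᶜ →
            p ∈ supports G ∧ G.neighborSet p ⊆ {q, g p} := by
          intro p q hp hpq hh
          have hsub : G.neighborSet p ⊆ insert q L₀ := by
            intro x hx
            by_contra hxn
            rw [Set.mem_insert_iff] at hxn
            push_neg at hxn
            have hx0 : x ∉ L₀ := hxn.2
            have hw : x ∈ closedNbr G p ∩ L₀ᶜ := ⟨adj_mem_cn hx, hx0⟩
            rw [hh] at hw
            rcases mem_cn.mp hw.1 with heq | hadj2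
            · exact hxn.1 heq
            · exact htf p q x hpq hx hadj2
          have hdg : 1 < (G.neighborSet p).ncard := by
            have := two_le_deg hconn (by omega) hp; omega
          obtain ⟨x, hx, hxq⟩ := Set.exists_ne_of_one_lt_ncard hdg q
          have hx0 : x ∈ L₀ := by
            rcases hsub hx with h1 | h1
            · exact absurd h1 hxq
            · exact h1
          have hps := hL0nb p x hx hx0
          refine ⟨hps.1, ?_⟩
          intro y hy
          rcases hsub hy with h1 | h1
          · exact Or.inl h1
          · exact Or.inr ((hL0nb p y hy h1).2 ▸ rfl)
        have hA := claim a b ha hadj h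
        have hB := claim b a hb hadj.symm h.symm
        have hT : ∀ x ∈ ({a, b, g a, g b} : Set V), ∀ y, G.Adj x y →
            y ∈ ({a, b, g a, g b} : Set V) := by
          rintro x (rfl | rfl | rfl | rfl) y hy
          · rcases hA.2 hy with h1 | h1
            · exact Or.inr (Or.inl h1)
            · exact Or.inr (Or.inr (Or.inl h1))
          · rcases hB.2 hy with h1 | h1
            · exact Or.inl h1
            · exact Or.inr (Or.inr (Or.inr h1))
          · exact Or.inl ((hsptU (g a) y (hg a hA.1).1 hy).trans (hgspt a hA.1))
          · exact Or.inr (Or.inl ((hsptU (g b) y (hg b hB.1).1 hy).trans (hgspt b hB.1)))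
        have hcard := card_le_of_closed hconn _ hT (Set.mem_insert a _)
        have := ncard4 a b (g a) (g b)
        omega
      · -- non-adjacent: witness a
        have hw : a ∈ closedNbr G a ∩ L₀ᶜ :=
          ⟨self_mem_cn a, fun hm => ha (hL0 _ hm).1⟩
        rw [h] at hw
        rcases mem_cn.mp hw.1 with heq | hadj2
        · exact hne heq
        · exact hadj hadj2.symm
    intro u v h
    by_contra hne
    by_cases hu : IsLeaf G u <;> by_cases hv : IsLeaf G v
    · exact keyLL u v hu hv hne h
    · exact keyLI u v hu hv hne h
    · exact keyLI v u hv hu (Ne.symm hne) h.symm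
    · exact keyII u v hu hv hne h
  · -- cardinality
    have hinj : Set.InjOn g (supports G) := by
      intro w1 h1 w2 h2 heq
      have := hgspt w1 h1
      rw [heq, hgspt w2 h2] at this
      exact this.symm
    have h1 : L₀.ncard = (supports G).ncard := Set.ncard_image_of_injOn hinj
    have h2 := Set.ncard_add_ncard_compl L₀ (Set.toFinite _) (Set.toFinite _)
    rw [Nat.card_eq_fintype_card] at h2
    omega

end IdAux

namespace IdAux

variable {V : Type*} [Fintype V] {G : SimpleGraph V}

lemma fin2 {x y k : Fin 2} (hxy : x ≠ y) (hyk : y ≠ k) : x = k := by omega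

lemma codeB (hconn : G.Connected) (hn : 5 ≤ Fintype.card V)
    (c : G.Coloring (Fin 2)) (k : Fin 2)
    (htwin : ∀ u v : V, u ≠ v → 2 ≤ (G.neighborSet u).ncard →
      2 ≤ (G.neighborSet v).ncard →
      G.neighborSet u ≠ G.neighborSet v ∧ closedNbr G u ≠ closedNbr G v)
    (hstar : ∀ w ∈ supports G, ∃ x, G.Adj w x ∧ ¬ IsLeaf G x) :
    ∃ C : Set V, IsIdCode G C ∧
      C.ncard ≤ (leaves G).ncard + {v : V | ¬ IsLeaf G v ∧ c v = k}.ncard := by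
  classical
  have hVne : Nonempty V := Fintype.card_pos_iff.mp (by omega)
  -- the support of each leaf
  have hsptE : ∀ v : V, ∃ u : V, IsLeaf G v → G.neighborSet v = {u} := by
    intro v
    by_cases hv : IsLeaf G v
    · obtain ⟨u, hu⟩ := leaf_nbhd hv; exact ⟨u, fun _ => hu⟩
    · exact ⟨Classical.arbitrary V, fun h => absurd h hv⟩
  choose spt hspt using hsptE
  have hsptA : ∀ v : V, IsLeaf G v → G.Adj v (spt v) := by
    intro v hv
    have : spt v ∈ G.neighborSet v := (hspt v hv) ▸ rfl
    exact this
  have hsptU : ∀ v x : V, IsLeaf G v → G.Adj v x → x = spt v := by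
    intro v x hv hx
    have : x ∈ ({spt v} : Set V) := (hspt v hv) ▸ hx
    exact this
  have hsptS : ∀ v : V, IsLeaf G v → spt v ∈ supports G := fun v hv =>
    ⟨v, hv, (hsptA v hv).symm⟩
  have hsptNL : ∀ v : V, IsLeaf G v → ¬ IsLeaf G (spt v) := fun v hv =>
    support_not_leaf hconn (by omega) (hsptS v hv)
  -- a chosen leaf of each support
  have hgE : ∀ w : V, ∃ l : V, w ∈ supports G → IsLeaf G l ∧ G.Adj w l := by
    intro w
    by_cases hw : w ∈ supports G
    · obtain ⟨l, hl, ha⟩ := hw; exact ⟨l, fun _ => ⟨hl, ha⟩⟩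
    · exact ⟨Classical.arbitrary V, fun h => absurd h hw⟩
  choose g hg using hgE
  have hgspt : ∀ w : V, w ∈ supports G → spt (g w) = w := by
    intro w hw
    exact (hsptU (g w) w (hg w hw).1 (hg w hw).2.symm).symm
  -- a chosen non-leaf neighbour of each support
  have hzE : ∀ w : V, ∃ x : V, w ∈ supports G → G.Adj w x ∧ ¬ IsLeaf G x := by
    intro w
    by_cases hw : w ∈ supports G
    · obtain ⟨x, hx⟩ := hstar w hw; exact ⟨x, fun _ => hx⟩
    · exact ⟨Classical.arbitrary V, fun h => absurd h hw⟩
  choose z hz using hzE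
  -- the code
  set A : Set V := {v : V | ¬ IsLeaf G v ∧ c v = k} with hAdef
  set D : Set V := {w : V | w ∈ supports G ∧ c w = k} with hDdef
  set C : Set V := ((leaves G \ g '' D) ∪ A) ∪ z '' D with hCdef
  have hDS : D ⊆ supports G := fun w hw => hw.1
  -- membership facts
  have hCA : ∀ x : V, ¬ IsLeaf G x → c x = k → x ∈ C := fun x h1 h2 =>
    Or.inl (Or.inr ⟨h1, h2⟩)
  have hCleaf : ∀ x : V, IsLeaf G x → x ∉ g '' D → x ∈ C := fun x h1 h2 =>
    Or.inl (Or.inl ⟨h1, h2⟩)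
  have hgD : ∀ x ∈ g '' D, IsLeaf G x ∧ spt x ∈ D ∧ x = g (spt x) := by
    rintro x ⟨w, hw, rfl⟩
    refine ⟨(hg w (hDS hw)).1, ?_, ?_⟩
    · rw [hgspt w (hDS hw)]; exact hw
    · rw [hgspt w (hDS hw)]
  have hzD : ∀ x ∈ z '' D, ¬ IsLeaf G x := by
    rintro x ⟨w, hw, rfl⟩
    exact (hz w (hDS hw)).2
  have hCz : ∀ w ∈ supports G, z w ∈ C := by
    intro w hw
    by_cases hck : c w = k
    · exact Or.inr ⟨w, ⟨hw, hck⟩, rfl⟩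
    · refine hCA _ (hz w hw).2 ?_
      exact fin2 (c.valid (hz w hw).1).symm hck
  have hCgD : ∀ x ∈ g '' D, x ∉ C := by
    intro x hx hC
    rcases hC with (⟨_, h2⟩ | h2) | h2
    · exact h2 hx
    · exact h2.1 (hgD x hx).1
    · exact hzD x h2 (hgD x hx).1
  have hleafC : ∀ x : V, IsLeaf G x → x ∈ C → x ∉ g '' D := by
    intro x hx hC hm
    exact hCgD x hm hC
  have hsptD : ∀ x : V, IsLeaf G x → x ∈ g '' D → spt x ∈ C := by
    intro x hx hm
    exact hCA (spt x) (hsptNL x hx) (hgD x hm).2.1.2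
  -- non-leaf, non-support vertices have all neighbours non-leaves
  have hfree : ∀ v x : V, v ∉ supports G → G.Adj v x → ¬ IsLeaf G x := by
    intro v x hv hadj hx
    exact hv ⟨x, hx, hadj⟩
  have hfreeC : ∀ v x : V, v ∉ supports G → ¬ (c v = k) → G.Adj v x → x ∈ C := by
    intro v x hv hcv hadj
    exact hCA x (hfree v x hv hadj) (fin2 (c.valid hadj).symm hcv)
  refine ⟨C, ⟨?_, ?_⟩, ?_⟩
  · -- nonempty
    intro v
    by_cases hv : IsLeaf G v
    · by_cases hm : v ∈ g '' D
      · exact ⟨spt v, adj_mem_cn (hsptA v hv), hsptD v hv hm⟩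
      · exact ⟨v, self_mem_cn v, hCleaf v hv hm⟩
    · by_cases hs : v ∈ supports G
      · exact ⟨z v, adj_mem_cn (hz v hs).1, hCz v hs⟩
      · by_cases hck : c v = k
        · exact ⟨v, self_mem_cn v, hCA v hv hck⟩
        · obtain ⟨x, hx⟩ := exists_adj hconn (by omega) v
          exact ⟨x, adj_mem_cn hx, hfreeC v x hs hck hx⟩
  · -- identifying property
    -- reusable claims
    have claimNonadj : ∀ p q : V, p ∈ C → p ≠ q → ¬ G.Adj q p →
        closedNbr G p ∩ C = closedNbr G q ∩ C → False := by
      intro p q hpC hne hnadj h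
      have hw : p ∈ closedNbr G q ∩ C := h ▸ ⟨self_mem_cn p, hpC⟩
      rcases mem_cn.mp hw.1 with heq | hadj
      · exact hne heq
      · exact hnadj hadj
    have claimSupNotD : ∀ p q : V, p ∈ supports G → ¬ (c p = k) → ¬ IsLeaf G q →
        p ≠ q → closedNbr G p ∩ C = closedNbr G q ∩ C → False := by
      intro p q hpS hpk hq hne h
      have hgpC : g p ∈ C := by
        refine hCleaf _ (hg p hpS).1 ?_
        intro hm
        have := (hgD _ hm).2.1
        rw [hgspt p hpS] at this
        exact hpk this.2
      have hw : g p ∈ closedNbr G q ∩ C := h ▸ ⟨adj_mem_cn (hg p hpS).2, hgpC⟩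
      rcases mem_cn.mp hw.1 with heq | hadj
      · exact hq (heq ▸ (hg p hpS).1)
      · have : q = spt (g p) := hsptU (g p) q (hg p hpS).1 hadj.symm
        rw [hgspt p hpS] at this
        exact hne this.symm
    have claimFreeAdj : ∀ p q : V, q ∉ supports G → ¬ IsLeaf G q → ¬ (c q = k) →
        G.Adj p q → c p = k → closedNbr G p ∩ C = closedNbr G q ∩ C → False := by
      intro p q hqS hq hqk hadj hpk h
      have hdg : 1 < (G.neighborSet q).ncard := by
        have := two_le_deg hconn (by omega) hq; omega
      obtain ⟨x, hx, hxp⟩ := Set.exists_ne_of_one_lt_ncard hdg p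
      have hxC : x ∈ C := hfreeC q x hqS hqk hx
      have hw : x ∈ closedNbr G p ∩ C := h.symm ▸ ⟨adj_mem_cn hx, hxC⟩
      rcases mem_cn.mp hw.1 with heq | hadj2
      · exact hxp heq
      · have h1 : c x = k := fin2 (c.valid hx).symm hqk
        have h2 : c x ≠ c p := (c.valid hadj2).symm
        rw [h1, hpk] at h2
        exact h2 rfl
    have keyLL : ∀ a b : V, IsLeaf G a → IsLeaf G b → a ≠ b →
        closedNbr G a ∩ C = closedNbr G b ∩ C → False := by
      intro a b ha hb hne h
      by_cases hb0 : b ∈ g '' D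
      · by_cases ha0 : a ∈ g '' D
        · have hw : spt a ∈ closedNbr G b ∩ C :=
            h ▸ ⟨adj_mem_cn (hsptA a ha), hsptD a ha ha0⟩
          rcases mem_cn.mp hw.1 with heq | hadj
          · exact hsptNL a ha (heq ▸ hb)
          · have h1 : spt a = spt b := hsptU b (spt a) hb hadj
            have h2 : a = b := by
              rw [(hgD a ha0).2.2, (hgD b hb0).2.2, h1]
            exact hne h2
        · have hw : a ∈ closedNbr G b ∩ C :=
            h ▸ ⟨self_mem_cn a, hCleaf a ha ha0⟩
          rcases mem_cn.mp hw.1 with heq | hadj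
          · exact hne heq
          · exact no_adj_leaves hconn (by omega) hb ha hadj
      · have hw : b ∈ closedNbr G a ∩ C :=
          h.symm ▸ ⟨self_mem_cn b, hCleaf b hb hb0⟩
        rcases mem_cn.mp hw.1 with heq | hadj
        · exact hne heq.symm
        · exact no_adj_leaves hconn (by omega) ha hb hadj
    have keyLI : ∀ a b : V, IsLeaf G a → ¬ IsLeaf G b → a ≠ b →
        closedNbr G a ∩ C = closedNbr G b ∩ C → False := by
      intro a b ha hb hne h
      by_cases hbw : b = spt a
      · -- b is the support of a: witness z b
        have hwS : spt a ∈ supports G := hsptS a ha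
        have hzwC : z (spt a) ∈ C := hCz _ hwS
        have hzadj : G.Adj (spt a) (z (spt a)) := (hz _ hwS).1
        have hw : z (spt a) ∈ closedNbr G a ∩ C := by
          rw [h, hbw]
          exact ⟨adj_mem_cn hzadj, hzwC⟩
        rcases mem_cn.mp hw.1 with heq | hadj
        · exact (hz _ hwS).2 (by rw [heq]; exact ha)
        · have : z (spt a) = spt a := (hsptU a _ ha hadj).symm ▸ rfl
          exact G.ne_of_adj hzadj this.symm
      · by_cases hbC : b ∈ C
        · have hw : b ∈ closedNbr G a ∩ C := h.symm ▸ ⟨self_mem_cn b, hbC⟩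
          rcases mem_cn.mp hw.1 with heq | hadj
          · exact hne heq.symm
          · exact hbw (hsptU a b ha hadj)
        · -- b not in C: b non-leaf with c b ≠ k, b ∉ z '' D
          have hbk : ¬ (c b = k) := fun hk => hbC (hCA b hb hk)
          by_cases hbS : b ∈ supports G
          · -- witness g b
            have hgbC : g b ∈ C := by
              refine hCleaf _ (hg b hbS).1 ?_
              intro hm
              have := (hgD _ hm).2.1
              rw [hgspt b hbS] at this
              exact hbk this.2
            have hw : g b ∈ closedNbr G a ∩ C :=
              h.symm ▸ ⟨adj_mem_cn (hg b hbS).2, hgbC⟩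
            rcases mem_cn.mp hw.1 with heq | hadj
            · -- g b = a : then spt a = b, contradiction with hbw
              exact hbw (by rw [← heq, hgspt b hbS])
            · exact no_adj_leaves hconn (by omega) ha (hg b hbS).1 hadj
          · -- b free: witness x ∈ nb b, x ≠ spt a
            have hdg : 1 < (G.neighborSet b).ncard := by
              have := two_le_deg hconn (by omega) hb; omega
            obtain ⟨x, hx, hxw⟩ := Set.exists_ne_of_one_lt_ncard hdg (spt a)
            have hxC : x ∈ C := hfreeC b x hbS hbk hx
            have hw : x ∈ closedNbr G a ∩ C := h.symm ▸ ⟨adj_mem_cn hx, hxC⟩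
            rcases mem_cn.mp hw.1 with heq | hadj
            · exact hfree b x hbS hx (heq ▸ ha)
            · exact hxw (hsptU a x ha hadj)
    have keyII : ∀ a b : V, ¬ IsLeaf G a → ¬ IsLeaf G b → a ≠ b →
        closedNbr G a ∩ C = closedNbr G b ∩ C → False := by
      intro a b ha hb hne h
      by_cases hadj : G.Adj a b
      · by_cases hca : c a = k
        · by_cases hbS : b ∈ supports G
          · have hcb : ¬ (c b = k) := by
              intro hk
              exact (c.valid hadj) (hca.trans hk.symm)
            exact claimSupNotD b a hbS hcb ha (Ne.symm hne) h.symm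
          · have hcb : ¬ (c b = k) := by
              intro hk
              exact (c.valid hadj) (hca.trans hk.symm)
            exact claimFreeAdj a b hbS hb hcb hadj hca h
        · have hcb : c b = k := fin2 (c.valid hadj).symm hca
          by_cases haS : a ∈ supports G
          · exact claimSupNotD a b haS hca hb hne h
          · exact claimFreeAdj b a haS ha hca hadj.symm hcb h.symm
      · by_cases hca : c a = k
        · exact claimNonadj a b (hCA a ha hca) hne (fun h2 => hadj h2.symm) h
        · by_cases hcb : c b = k
          · exact claimNonadj b a (hCA b hb hcb) (Ne.symm hne) hadj h.symm
          · by_cases haz : a ∈ z '' D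
            · exact claimNonadj a b (Or.inr haz) hne (fun h2 => hadj h2.symm) h
            · by_cases hbz : b ∈ z '' D
              · exact claimNonadj b a (Or.inr hbz) (Ne.symm hne) hadj h.symm
              · by_cases haS : a ∈ supports G
                · exact claimSupNotD a b haS hca hb hne h
                · by_cases hbS : b ∈ supports G
                  · exact claimSupNotD b a hbS hcb ha (Ne.symm hne) h.symm
                  · -- both free, both off-side: use twin-freeness
                    have haC : a ∉ C := by
                      intro hC
                      rcases hC with (⟨h1, _⟩ | h1) | h1
                      · exact ha h1
                      · exact hca h1.2
                      · exact haz h1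
                    have hbC : b ∉ C := by
                      intro hC
                      rcases hC with (⟨h1, _⟩ | h1) | h1
                      · exact hb h1
                      · exact hcb h1.2
                      · exact hbz h1
                    have hea : closedNbr G a ∩ C = G.neighborSet a := by
                      ext x
                      constructor
                      · rintro ⟨hx1, hx2⟩
                        rcases mem_cn.mp hx1 with heq | hadj2
                        · exact absurd (heq ▸ hx2) haC
                        · exact hadj2
                      · intro hx
                        exact ⟨adj_mem_cn hx, hfreeC a x haS hca hx⟩
                    have heb : closedNbr G b ∩ C = G.neighborSet b := by
                      ext x
                      constructor
                      · rintro ⟨hx1, hx2⟩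
                        rcases mem_cn.mp hx1 with heq | hadj2
                        · exact absurd (heq ▸ hx2) hbC
                        · exact hadj2
                      · intro hx
                        exact ⟨adj_mem_cn hx, hfreeC b x hbS hcb hx⟩
                    have := (htwin a b hne (two_le_deg hconn (by omega) ha)
                      (two_le_deg hconn (by omega) hb)).1
                    rw [← hea, ← heb] at this
                    exact this h
    intro u v h
    by_contra hne
    by_cases hu : IsLeaf G u <;> by_cases hv : IsLeaf G v
    · exact keyLL u v hu hv hne h
    · exact keyLI u v hu hv hne h
    · exact keyLI v u hv hu (Ne.symm hne) h.symm
    · exact keyII u v hu hv hne h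
  · -- cardinality
    have hgDL : g '' D ⊆ leaves G := by
      rintro x ⟨w, hw, rfl⟩
      exact (hg w (hDS hw)).1
    have hinj : Set.InjOn g D := by
      intro w1 h1 w2 h2 heq
      have := hgspt w1 (hDS h1)
      rw [heq, hgspt w2 (hDS h2)] at this
      exact this.symm
    have h1 : (g '' D).ncard = D.ncard := Set.ncard_image_of_injOn hinj
    have h2 : (leaves G \ g '' D).ncard + (g '' D).ncard = (leaves G).ncard :=
      Set.ncard_diff_add_ncard_of_subset hgDL (Set.toFinite _)
    have h3 : (z '' D).ncard ≤ D.ncard := Set.ncard_image_le (Set.toFinite _)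
    have h4 : C.ncard ≤ ((leaves G \ g '' D) ∪ A).ncard + (z '' D).ncard :=
      Set.ncard_union_le _ _
    have h5 : ((leaves G \ g '' D) ∪ A).ncard ≤ (leaves G \ g '' D).ncard + A.ncard :=
      Set.ncard_union_le _ _
    omega

end IdAux


theorem stmt_5 {V : Type*} [Fintype V] (G : SimpleGraph V)
    (hconn : G.Connected) (hbip : G.Colorable 2) (hn : 5 ≤ Fintype.card V)
    (htwin : ∀ u v : V, u ≠ v → 2 ≤ (G.neighborSet u).ncard →
      2 ≤ (G.neighborSet v).ncard →
      G.neighborSet u ≠ G.neighborSet v ∧ closedNbr G u ≠ closedNbr G v) :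
    ∃ C : Set V, IsIdCode G C ∧
      (C.ncard : ℝ) ≤
        min (((Fintype.card V : ℝ) + (leaves G).ncard) / 2)
          ((Fintype.card V : ℝ) - (supports G).ncard) := by
  classical
  obtain ⟨c⟩ := hbip
  have htf : ∀ u v x : V, G.Adj u v → G.Adj u x → G.Adj v x → False := by
    intro u v x h1 h2 h3
    have e1 := c.valid h1
    have e2 := c.valid h2
    have e3 := c.valid h3
    have key : ∀ p q r : Fin 2, p ≠ q → p ≠ r → q ≠ r → False := by decide
    exact key _ _ _ e1 e2 e3
  by_cases hcase : (leaves G).ncard + 2 * (supports G).ncard ≤ Fintype.card V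
  · -- use the (n + ℓ)/2 construction
    have hstar : ∀ w ∈ supports G, ∃ x, G.Adj w x ∧ ¬ IsLeaf G x := by
      intro w hw
      by_contra hno
      push_neg at hno
      have hT : ∀ x ∈ insert w (G.neighborSet w), ∀ y, G.Adj x y →
          y ∈ insert w (G.neighborSet w) := by
        rintro x hx y hy
        rcases hx with rfl | hx
        · exact Or.inr hy
        · exact Or.inl (IdAux.leaf_unique (hno x hx) hy (G.adj_symm hx))
      have hle := IdAux.card_le_of_closed hconn _ hT (Set.mem_insert w _)
      have h2 : (insert w (G.neighborSet w)).ncard ≤ (G.neighborSet w).ncard + 1 :=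
        Set.ncard_insert_le _ _
      have h3 : (G.neighborSet w).ncard ≤ (leaves G).ncard :=
        Set.ncard_le_ncard (fun x hx => hno x hx) (Set.toFinite _)
      have h4 : 0 < (supports G).ncard :=
        (Set.nonempty_of_mem hw).ncard_pos (Set.toFinite _)
      omega
    have hpart : {v : V | ¬ IsLeaf G v ∧ c v = 0}.ncard +
        {v : V | ¬ IsLeaf G v ∧ c v = 1}.ncard + (leaves G).ncard = Fintype.card V := by
      have hdisj : Disjoint {v : V | ¬ IsLeaf G v ∧ c v = 0}
          {v : V | ¬ IsLeaf G v ∧ c v = 1} := by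
        rw [Set.disjoint_left]
        rintro a ⟨_, h0⟩ ⟨_, h1⟩
        rw [h0] at h1
        exact absurd h1 (by decide)
      have hunion : {v : V | ¬ IsLeaf G v ∧ c v = 0} ∪
          {v : V | ¬ IsLeaf G v ∧ c v = 1} = (leaves G)ᶜ := by
        ext v
        simp only [Set.mem_union, Set.mem_setOf_eq, Set.mem_compl_iff]
        constructor
        · rintro (⟨h, _⟩ | ⟨h, _⟩) <;> exact h
        · intro h
          have : c v = 0 ∨ c v = 1 := by omega
          rcases this with h0 | h1
          · exact Or.inl ⟨h, h0⟩
          · exact Or.inr ⟨h, h1⟩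
      have h1 : {v : V | ¬ IsLeaf G v ∧ c v = 0}.ncard +
          {v : V | ¬ IsLeaf G v ∧ c v = 1}.ncard = ((leaves G)ᶜ).ncard := by
        rw [← hunion, Set.ncard_union_eq hdisj (Set.toFinite _) (Set.toFinite _)]
      have h2 := Set.ncard_add_ncard_compl (leaves G) (Set.toFinite _) (Set.toFinite _)
      rw [Nat.card_eq_fintype_card] at h2
      omega
    have hfinish : ∀ C : Set V, IsIdCode G C → 2 * C.ncard ≤ Fintype.card V + (leaves G).ncard →
        ∃ C : Set V, IsIdCode G C ∧
          (C.ncard : ℝ) ≤ min (((Fintype.card V : ℝ) + (leaves G).ncard) / 2)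
            ((Fintype.card V : ℝ) - (supports G).ncard) := by
      intro C hC hcard
      refine ⟨C, hC, le_min ?_ ?_⟩
      · have := (Nat.cast_le (α := ℝ)).mpr hcard
        push_cast at this
        linarith
      · have h2 : C.ncard + (supports G).ncard ≤ Fintype.card V := by omega
        have := (Nat.cast_le (α := ℝ)).mpr h2
        push_cast at this
        linarith
    rcases le_total {v : V | ¬ IsLeaf G v ∧ c v = 0}.ncard
        {v : V | ¬ IsLeaf G v ∧ c v = 1}.ncard with hk | hk
    · obtain ⟨C, hC, hcard⟩ := IdAux.codeB hconn hn c 0 htwin hstar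
      exact hfinish C hC (by omega)
    · obtain ⟨C, hC, hcard⟩ := IdAux.codeB hconn hn c 1 htwin hstar
      exact hfinish C hC (by omega)
  · -- use the n - s construction
    obtain ⟨C, hC, hcard⟩ := IdAux.codeA hconn hn htf
    refine ⟨C, hC, le_min ?_ ?_⟩
    · have h2 : 2 * C.ncard ≤ Fintype.card V + (leaves G).ncard := by omega
      have := (Nat.cast_le (α := ℝ)).mpr h2
      push_cast at this
      linarith
    · have h2 : C.ncard + (supports G).ncard ≤ Fintype.card V := le_of_eq hcard
      have := (Nat.cast_le (α := ℝ)).mpr h2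
      push_cast at this
      linarith
end

section
/- Let H be any connected graph of order at least 2, and let G = H∘₂ be its 2-corona (obtained by attaching a pendant path of length 2 to each vertex of H), of order n = 3|V(H)|. Then G is twin-free and γ^ID(G) = 2n/3. -/
open SimpleGraph

/-- The 2-corona of a graph: to each vertex (v,0) attach a pendant path (v,1)-(v,2). -/
def twoCorona {A : Type*} (H : SimpleGraph A) : SimpleGraph (A × Fin 3) :=
  SimpleGraph.fromRel (fun p q =>
    (p.2 = 0 ∧ q.2 = 0 ∧ H.Adj p.1 q.1) ∨
    (p.1 = q.1 ∧ p.2 = 0 ∧ q.2 = 1) ∨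
    (p.1 = q.1 ∧ p.2 = 1 ∧ q.2 = 2))

section Aux

variable {A : Type*} (H : SimpleGraph A)

lemma tc_adj (a b : A) (i j : Fin 3) :
    (twoCorona H).Adj (a,i) (b,j) ↔
      (i = 0 ∧ j = 0 ∧ H.Adj a b) ∨
      (a = b ∧ (i = 0 ∧ j = 1 ∨ i = 1 ∧ j = 0 ∨ i = 1 ∧ j = 2 ∨ i = 2 ∧ j = 1)) := by
  rw [twoCorona, fromRel_adj]
  constructor
  · rintro ⟨hne, (⟨h0,h1,h2⟩|⟨h0,h1,h2⟩|⟨h0,h1,h2⟩)|(⟨h0,h1,h2⟩|⟨h0,h1,h2⟩|⟨h0,h1,h2⟩)⟩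
    · exact Or.inl ⟨h0, h1, h2⟩
    · exact Or.inr ⟨h0, Or.inl ⟨h1, h2⟩⟩
    · exact Or.inr ⟨h0, Or.inr (Or.inr (Or.inl ⟨h1, h2⟩))⟩
    · exact Or.inl ⟨h1, h0, h2.symm⟩
    · exact Or.inr ⟨h0.symm, Or.inr (Or.inl ⟨h2, h1⟩)⟩
    · exact Or.inr ⟨h0.symm, Or.inr (Or.inr (Or.inr ⟨h2, h1⟩))⟩
  · rintro (⟨h0,h1,h2⟩|⟨rfl, (⟨h1,h2⟩|⟨h1,h2⟩|⟨h1,h2⟩|⟨h1,h2⟩)⟩)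
    · exact ⟨by simp [Prod.ext_iff]; intro h; exact absurd (h ▸ h2) (H.irrefl), Or.inl (Or.inl ⟨h0,h1,h2⟩)⟩
    · exact ⟨by simp [Prod.ext_iff, h1, h2], Or.inl (Or.inr (Or.inl ⟨rfl,h1,h2⟩))⟩
    · exact ⟨by simp [Prod.ext_iff, h1, h2], Or.inr (Or.inr (Or.inl ⟨rfl,h2,h1⟩))⟩
    · exact ⟨by simp [Prod.ext_iff, h1, h2], Or.inl (Or.inr (Or.inr ⟨rfl,h1,h2⟩))⟩
    · exact ⟨by simp [Prod.ext_iff, h1, h2], Or.inr (Or.inr (Or.inr ⟨rfl,h2,h1⟩))⟩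

lemma mem_cn_iff (G : SimpleGraph (A × Fin 3)) (v x : A × Fin 3) :
    x ∈ closedNbr G v ↔ x = v ∨ G.Adj v x := by
  simp [closedNbr]

lemma on0 (a : A) (x : A × Fin 3) :
    x ∈ (twoCorona H).neighborSet (a, (0:Fin 3)) ↔ x = (a,1) ∨ (x.2 = 0 ∧ H.Adj a x.1) := by
  obtain ⟨b, j⟩ := x
  rw [mem_neighborSet, tc_adj]
  fin_cases j <;> simp [Prod.ext_iff] <;> tauto

lemma on1 (a : A) (x : A × Fin 3) :
    x ∈ (twoCorona H).neighborSet (a, (1:Fin 3)) ↔ x = (a,0) ∨ x = (a,2) := by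
  obtain ⟨b, j⟩ := x
  rw [mem_neighborSet, tc_adj]
  fin_cases j <;> simp [Prod.ext_iff] <;> tauto

lemma on2 (a : A) (x : A × Fin 3) :
    x ∈ (twoCorona H).neighborSet (a, (2:Fin 3)) ↔ x = (a,1) := by
  obtain ⟨b, j⟩ := x
  rw [mem_neighborSet, tc_adj]
  fin_cases j <;> simp [Prod.ext_iff] <;> tauto

lemma cn0 (a : A) (x : A × Fin 3) :
    x ∈ closedNbr (twoCorona H) (a, (0:Fin 3)) ↔
      x = (a,0) ∨ x = (a,1) ∨ (x.2 = 0 ∧ H.Adj a x.1) := by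
  rw [mem_cn_iff, ← mem_neighborSet, on0]

lemma cn1 (a : A) (x : A × Fin 3) :
    x ∈ closedNbr (twoCorona H) (a, (1:Fin 3)) ↔
      x = (a,0) ∨ x = (a,1) ∨ x = (a,2) := by
  rw [mem_cn_iff, ← mem_neighborSet, on1]; tauto

lemma cn2 (a : A) (x : A × Fin 3) :
    x ∈ closedNbr (twoCorona H) (a, (2:Fin 3)) ↔ x = (a,1) ∨ x = (a,2) := by
  rw [mem_cn_iff, ← mem_neighborSet, on2]; tauto

lemma exists_nbr [Fintype A] (hconn : H.Connected) (hA : 2 ≤ Fintype.card A) (a : A) :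
    ∃ c, H.Adj a c := by
  obtain ⟨b, hb⟩ := Fintype.exists_ne_of_one_lt_card (by omega) a
  obtain ⟨w⟩ := hconn.preconnected a b
  cases w with
  | nil => exact absurd rfl hb
  | cons h p => exact ⟨_, h⟩

lemma ncard_range_inj {α β : Type*} (f : α → β) (hf : Function.Injective f) :
    (Set.range f).ncard = Nat.card α := by
  rw [← Set.image_univ, Set.ncard_image_of_injective _ hf, Set.ncard_univ]

lemma fin3_trich (i : Fin 3) : i = 0 ∨ i = 1 ∨ i = 2 := by revert i; decide

end Aux

theorem stmt_7 {A : Type*} [Fintype A] (H : SimpleGraph A)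
    (hconn : H.Connected) (hA : 2 ≤ Fintype.card A) :
    TwinFree (twoCorona H) ∧
    ∃ k : ℕ, IsLeast {m : ℕ | ∃ C : Set (A × Fin 3), IsIdCode (twoCorona H) C ∧ C.ncard = m} k ∧
      3 * k = 2 * Fintype.card (A × Fin 3) := by
  have hnb : ∀ a : A, ∃ c, H.Adj a c := exists_nbr H hconn hA
  constructor
  · -- Twin-free
    rintro ⟨a, i⟩ ⟨b, j⟩ hne
    rcases fin3_trich i with rfl|rfl|rfl <;> rcases fin3_trich j with rfl|rfl|rfl
    -- (0,0)
    · have hab : a ≠ b := fun hh => hne (by rw [hh])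
      constructor
      · intro h
        have h1 : ((a,1) : A × Fin 3) ∈ (twoCorona H).neighborSet (a,0) := by simp [tc_adj]
        rw [h] at h1
        simp [tc_adj, hab.symm] at h1
      · intro h
        have h1 : ((a,1) : A × Fin 3) ∈ closedNbr (twoCorona H) (a,0) := by simp [cn0]
        rw [h] at h1
        simp [cn0, Prod.ext_iff, hab] at h1
    -- (0,1)
    · constructor
      · intro h
        have h1 : ((a,1) : A × Fin 3) ∈ (twoCorona H).neighborSet (a,0) := by simp [tc_adj]
        rw [h] at h1
        simp [tc_adj] at h1
      · intro h
        have h1 : ((b,2) : A × Fin 3) ∈ closedNbr (twoCorona H) (b,1) := by simp [cn1]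
        rw [← h] at h1
        simp [cn0, Prod.ext_iff] at h1
    -- (0,2)
    · obtain ⟨c, hc⟩ := hnb a
      constructor
      · intro h
        have h1 : ((c,0) : A × Fin 3) ∈ (twoCorona H).neighborSet (a,0) := by simp [tc_adj, hc]
        rw [h] at h1
        simp [tc_adj] at h1
      · intro h
        have h1 : ((a,0) : A × Fin 3) ∈ closedNbr (twoCorona H) (a,0) := by simp [cn0]
        rw [h] at h1
        simp [cn2, Prod.ext_iff] at h1
    -- (1,0)
    · constructor
      · intro h
        have h1 : ((a,2) : A × Fin 3) ∈ (twoCorona H).neighborSet (a,1) := by simp [tc_adj]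
        rw [h] at h1
        simp [tc_adj] at h1
      · intro h
        have h1 : ((a,2) : A × Fin 3) ∈ closedNbr (twoCorona H) (a,1) := by simp [cn1]
        rw [h] at h1
        simp [cn0, Prod.ext_iff] at h1
    -- (1,1)
    · have hab : a ≠ b := fun hh => hne (by rw [hh])
      constructor
      · intro h
        have h1 : ((a,0) : A × Fin 3) ∈ (twoCorona H).neighborSet (a,1) := by simp [tc_adj]
        rw [h] at h1
        simp [tc_adj, hab.symm] at h1
      · intro h
        have h1 : ((a,0) : A × Fin 3) ∈ closedNbr (twoCorona H) (a,1) := by simp [cn1]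
        rw [h] at h1
        simp [cn1, Prod.ext_iff, hab] at h1
    -- (1,2)
    · constructor
      · intro h
        have h1 : ((a,0) : A × Fin 3) ∈ (twoCorona H).neighborSet (a,1) := by simp [tc_adj]
        rw [h] at h1
        simp [tc_adj] at h1
      · intro h
        have h1 : ((a,0) : A × Fin 3) ∈ closedNbr (twoCorona H) (a,1) := by simp [cn1]
        rw [h] at h1
        simp [cn2, Prod.ext_iff] at h1
    -- (2,0)
    · obtain ⟨c, hc⟩ := hnb b
      constructor
      · intro h
        have h1 : ((c,0) : A × Fin 3) ∈ (twoCorona H).neighborSet (b,0) := by simp [tc_adj, hc]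
        rw [← h] at h1
        simp [tc_adj] at h1
      · intro h
        have h1 : ((b,0) : A × Fin 3) ∈ closedNbr (twoCorona H) (b,0) := by simp [cn0]
        rw [← h] at h1
        simp [cn2, Prod.ext_iff] at h1
    -- (2,1)
    · constructor
      · intro h
        have h1 : ((b,2) : A × Fin 3) ∈ (twoCorona H).neighborSet (b,1) := by simp [tc_adj]
        rw [← h] at h1
        simp [tc_adj] at h1
      · intro h
        have h1 : ((b,0) : A × Fin 3) ∈ closedNbr (twoCorona H) (b,1) := by simp [cn1]
        rw [← h] at h1
        simp [cn2, Prod.ext_iff] at h1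
    -- (2,2)
    · have hab : a ≠ b := fun hh => hne (by rw [hh])
      constructor
      · intro h
        have h1 : ((a,1) : A × Fin 3) ∈ (twoCorona H).neighborSet (a,2) := by simp [tc_adj]
        rw [h] at h1
        simp [tc_adj, hab.symm] at h1
      · intro h
        have h1 : ((a,1) : A × Fin 3) ∈ closedNbr (twoCorona H) (a,2) := by simp [cn2]
        rw [h] at h1
        simp [cn2, Prod.ext_iff, hab] at h1
  · -- identifying code number
    refine ⟨2 * Fintype.card A, ⟨?_, ?_⟩, ?_⟩
    · -- membership: the code A × {0,1}
      set C : Set (A × Fin 3) := {p | p.2 ≠ 2} with hC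
      refine ⟨C, ⟨?_, ?_⟩, ?_⟩
      · rintro ⟨a, i⟩
        refine ⟨(a,1), ?_, by simp [hC]⟩
        rcases fin3_trich i with rfl|rfl|rfl
        · simp [cn0]
        · simp [cn1]
        · simp [cn2]
      · rintro ⟨a, i⟩ ⟨b, j⟩ h
        rcases fin3_trich i with rfl|rfl|rfl <;> rcases fin3_trich j with rfl|rfl|rfl
        -- (0,0)
        · have h1 : ((a,1) : A × Fin 3) ∈ closedNbr (twoCorona H) (a,0) ∩ C :=
            ⟨by simp [cn0], by simp [hC]⟩
          rw [h] at h1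
          obtain ⟨h2, -⟩ := h1
          simp only [cn0, Prod.mk.injEq] at h2
          have hab : a = b := by
            rcases h2 with ⟨-, hh⟩|⟨hh,-⟩|⟨hh,-⟩
            · exact absurd hh (by decide)
            · exact hh
            · exact absurd hh (by decide)
          rw [hab]
        -- (0,1)
        · have h1 : ((a,1) : A × Fin 3) ∈ closedNbr (twoCorona H) (a,0) ∩ C :=
            ⟨by simp [cn0], by simp [hC]⟩
          rw [h] at h1
          obtain ⟨h2, -⟩ := h1
          have hab : a = b := by simp [cn1, Prod.ext_iff] at h2; exact h2
          subst hab
          obtain ⟨c, hc⟩ := hnb a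
          have h3 : ((c,0) : A × Fin 3) ∈ closedNbr (twoCorona H) (a,0) ∩ C :=
            ⟨by simp [cn0, hc], by simp [hC]⟩
          rw [h] at h3
          obtain ⟨h4, -⟩ := h3
          have hca : c = a := by simp [cn1, Prod.ext_iff] at h4; exact h4
          exact absurd (hca ▸ hc) (H.irrefl)
        -- (0,2)
        · have h1 : ((a,0) : A × Fin 3) ∈ closedNbr (twoCorona H) (a,0) ∩ C :=
            ⟨by simp [cn0], by simp [hC]⟩
          rw [h] at h1
          obtain ⟨h2, -⟩ := h1
          simp [cn2, Prod.ext_iff] at h2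
        -- (1,0)
        · have h1 : ((a,1) : A × Fin 3) ∈ closedNbr (twoCorona H) (a,1) ∩ C :=
            ⟨by simp [cn1], by simp [hC]⟩
          rw [h] at h1
          obtain ⟨h2, -⟩ := h1
          have hab : a = b := by
            simp only [cn0, Prod.mk.injEq] at h2
            rcases h2 with ⟨-, hh⟩|⟨hh,-⟩|⟨hh,-⟩
            · exact absurd hh (by decide)
            · exact hh
            · exact absurd hh (by decide)
          subst hab
          obtain ⟨c, hc⟩ := hnb a
          have h3 : ((c,0) : A × Fin 3) ∈ closedNbr (twoCorona H) (a,0) ∩ C :=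
            ⟨by simp [cn0, hc], by simp [hC]⟩
          rw [← h] at h3
          obtain ⟨h4, -⟩ := h3
          have hca : c = a := by simp [cn1, Prod.ext_iff] at h4; exact h4
          exact absurd (hca ▸ hc) (H.irrefl)
        -- (1,1)
        · have h1 : ((a,1) : A × Fin 3) ∈ closedNbr (twoCorona H) (a,1) ∩ C :=
            ⟨by simp [cn1], by simp [hC]⟩
          rw [h] at h1
          obtain ⟨h2, -⟩ := h1
          have hab : a = b := by simp [cn1, Prod.ext_iff] at h2; exact h2
          rw [hab]
        -- (1,2)
        · have h1 : ((a,0) : A × Fin 3) ∈ closedNbr (twoCorona H) (a,1) ∩ C :=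
            ⟨by simp [cn1], by simp [hC]⟩
          rw [h] at h1
          obtain ⟨h2, -⟩ := h1
          simp [cn2, Prod.ext_iff] at h2
        -- (2,0)
        · have h1 : ((b,0) : A × Fin 3) ∈ closedNbr (twoCorona H) (b,0) ∩ C :=
            ⟨by simp [cn0], by simp [hC]⟩
          rw [← h] at h1
          obtain ⟨h2, -⟩ := h1
          simp [cn2, Prod.ext_iff] at h2
        -- (2,1)
        · have h1 : ((b,0) : A × Fin 3) ∈ closedNbr (twoCorona H) (b,1) ∩ C :=
            ⟨by simp [cn1], by simp [hC]⟩
          rw [← h] at h1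
          obtain ⟨h2, -⟩ := h1
          simp [cn2, Prod.ext_iff] at h2
        -- (2,2)
        · have h1 : ((a,1) : A × Fin 3) ∈ closedNbr (twoCorona H) (a,2) ∩ C :=
            ⟨by simp [cn2], by simp [hC]⟩
          rw [h] at h1
          obtain ⟨h2, -⟩ := h1
          have hab : a = b := by simp [cn2, Prod.ext_iff] at h2; exact h2
          rw [hab]
      · -- cardinality of C
        have hCr : C = Set.range (fun p : A × Fin 2 => ((p.1, (⟨p.2.val, by omega⟩ : Fin 3)) : A × Fin 3)) := by
          ext ⟨a, j⟩
          simp only [hC, Set.mem_setOf_eq, Set.mem_range, Prod.ext_iff]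
          constructor
          · intro hj
            rcases fin3_trich j with rfl|rfl|rfl
            · exact ⟨(a, 0), rfl, rfl⟩
            · exact ⟨(a, 1), rfl, rfl⟩
            · exact absurd rfl hj
          · rintro ⟨⟨c, k⟩, rfl, hk⟩
            rw [← hk]
            simp only [ne_eq, Fin.ext_iff]
            omega
        rw [hCr, ncard_range_inj]
        · simp [Nat.card_eq_fintype_card, mul_comm]
        · rintro ⟨a, i⟩ ⟨b, j⟩ hh
          simp only [Prod.ext_iff, Fin.ext_iff] at hh ⊢
          exact ⟨hh.1, hh.2⟩
    · -- lower bound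
      rintro m ⟨C, ⟨hdom, hsep⟩, rfl⟩
      have h0 : ∀ a : A, ((a,(0:Fin 3)) : A × Fin 3) ∈ C := by
        intro a
        by_contra hc0
        have heq : closedNbr (twoCorona H) (a,1) ∩ C = closedNbr (twoCorona H) (a,2) ∩ C := by
          ext x
          simp only [Set.mem_inter_iff, cn1, cn2]
          constructor
          · rintro ⟨hx|hx|hx, hxC⟩
            · exact absurd (hx ▸ hxC) hc0
            · exact ⟨Or.inl hx, hxC⟩
            · exact ⟨Or.inr hx, hxC⟩
          · rintro ⟨hx|hx, hxC⟩
            · exact ⟨Or.inr (Or.inl hx), hxC⟩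
            · exact ⟨Or.inr (Or.inr hx), hxC⟩
        have := hsep _ _ heq
        simp [Prod.ext_iff] at this
      have h12 : ∀ a : A, ∃ w, w ∈ C ∧ (w = ((a,(1:Fin 3)):A×Fin 3) ∨ w = (a,2)) := by
        intro a
        obtain ⟨w, hw1, hw2⟩ := hdom (a,2)
        rw [cn2] at hw1
        exact ⟨w, hw2, hw1⟩
      choose w hwC hw12 using h12
      set f : A × Fin 2 → A × Fin 3 := fun p => if p.2 = 0 then (p.1, 0) else w p.1 with hf
      have hfst : ∀ p, (f p).1 = p.1 := by
        intro p
        by_cases hp : p.2 = 0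
        · simp [hf, hp]
        · rcases hw12 p.1 with hh|hh <;> simp [hf, hp, hh]
      have hsnd : ∀ p, ((f p).2 = 0 ↔ p.2 = 0) := by
        intro p
        by_cases hp : p.2 = 0
        · simp [hf, hp]
        · rcases hw12 p.1 with hh|hh <;> simp [hf, hp, hh] <;> decide
      have hfC : ∀ p, f p ∈ C := by
        intro p
        by_cases hp : p.2 = 0
        · simp only [hf, hp, if_pos]
          exact h0 p.1
        · simp only [hf, if_neg hp]
          exact hwC p.1
      have hfinj : Function.Injective f := by
        intro p q hpq
        have e1 : p.1 = q.1 := by rw [← hfst p, ← hfst q, hpq]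
        have e2 : p.2 = q.2 := by
          have := (hsnd p).symm.trans (hpq ▸ hsnd q)
          omega
        exact Prod.ext e1 e2
      calc 2 * Fintype.card A = Nat.card (A × Fin 2) := by
              simp [Nat.card_eq_fintype_card, mul_comm]
        _ = (Set.range f).ncard := (ncard_range_inj f hfinj).symm
        _ ≤ C.ncard := Set.ncard_le_ncard (Set.range_subset_iff.mpr hfC) (Set.toFinite C)
    · simp only [Fintype.card_prod, Fintype.card_fin]
      ring
end

section
/- The minimum size of an identifying code of the path P_n on n ≥ 4 vertices equals ⌈(n+1)/2⌉. -/
open SimpleGraph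

namespace IdCodeAux

/-- membership in closed neighbourhood of path graph, general form -/
lemma mem_cn {n : ℕ} (w v : Fin n) :
    w ∈ closedNbr (pathGraph n) v ↔ (w.val = v.val ∨ w.val + 1 = v.val ∨ v.val + 1 = w.val) := by
  simp only [closedNbr, Set.mem_insert_iff, mem_neighborSet, pathGraph_adj, Fin.ext_iff]
  tauto

/-- membership with explicit mk on the left -/
lemma mem_cn_mk {n : ℕ} (a : ℕ) (ha : a < n) (v : Fin n) :
    (⟨a, ha⟩ : Fin n) ∈ closedNbr (pathGraph n) v ↔ (a = v.val ∨ a + 1 = v.val ∨ v.val + 1 = a) :=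
  mem_cn _ _

/-- membership with explicit mk on the right -/
lemma mem_cn_mk' {n : ℕ} (w : Fin n) (a : ℕ) (ha : a < n) :
    w ∈ closedNbr (pathGraph n) (⟨a, ha⟩ : Fin n) ↔ (w.val = a ∨ w.val + 1 = a ∨ a + 1 = w.val) :=
  mem_cn _ _

/-- the optimal code as a Finset -/
def codeF (n : ℕ) : Finset (Fin n) :=
  Finset.univ.filter (fun v => v.val % 2 = 0 ∨ v.val = n - 3)

lemma mem_codeF {n : ℕ} (v : Fin n) :
    v ∈ codeF n ↔ (v.val % 2 = 0 ∨ v.val = n - 3) := by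
  simp [codeF]

lemma mem_codeF_mk {n : ℕ} (a : ℕ) (ha : a < n) :
    (⟨a, ha⟩ : Fin n) ∈ codeF n ↔ (a % 2 = 0 ∨ a = n - 3) := by
  simp [codeF]

lemma code_nonempty {n : ℕ} (v : Fin n) :
    (closedNbr (pathGraph n) v ∩ ↑(codeF n)).Nonempty := by
  by_cases h : v.val % 2 = 0
  · exact ⟨v, (mem_cn v v).mpr (by omega), by rw [Finset.mem_coe, mem_codeF]; omega⟩
  · have h1 : v.val - 1 < n := lt_of_le_of_lt (Nat.sub_le _ _) v.isLt
    refine ⟨⟨v.val - 1, h1⟩, (mem_cn_mk _ h1 v).mpr (by omega), ?_⟩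
    rw [Finset.mem_coe, mem_codeF_mk]; omega

lemma code_key {n : ℕ} (hn : 4 ≤ n) (u v : Fin n) (hlt : u.val < v.val)
    (h : closedNbr (pathGraph n) u ∩ ↑(codeF n) = closedNbr (pathGraph n) v ∩ ↑(codeF n)) :
    False := by
  have hv := v.isLt
  have hu := u.isLt
  by_cases h3 : u.val + 3 ≤ v.val
  · obtain ⟨w, hw1, hw2⟩ := code_nonempty (n := n) u
    have hw3 : w ∈ closedNbr (pathGraph n) v ∩ ↑(codeF n) := h ▸ ⟨hw1, hw2⟩
    have e1 := (mem_cn w u).mp hw1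
    have e2 := (mem_cn w v).mp hw3.1
    omega
  · by_cases h1 : v.val = u.val + 1
    · -- adjacent case
      by_cases hpar : u.val % 2 = 0
      · by_cases hend : u.val + 2 < n
        · -- witness u+2 in trace of v but not of u
          have hwmem : (⟨u.val + 2, hend⟩ : Fin n) ∈ closedNbr (pathGraph n) v ∩ ↑(codeF n) :=
            ⟨(mem_cn_mk _ hend v).mpr (by omega), by rw [Finset.mem_coe, mem_codeF_mk]; omega⟩
          rw [← h] at hwmem
          have := (mem_cn_mk _ hend u).mp hwmem.1
          omega
        · -- u = n-2, witness n-3 in trace of u but not of v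
          have hm : n - 3 < n := by omega
          have hwmem : (⟨n - 3, hm⟩ : Fin n) ∈ closedNbr (pathGraph n) u ∩ ↑(codeF n) :=
            ⟨(mem_cn_mk _ hm u).mpr (by omega), by rw [Finset.mem_coe, mem_codeF_mk]; omega⟩
          rw [h] at hwmem
          have := (mem_cn_mk _ hm v).mp hwmem.1
          omega
      · -- u odd : witness u-1 in trace of u but not of v
        have hm : u.val - 1 < n := by omega
        have hwmem : (⟨u.val - 1, hm⟩ : Fin n) ∈ closedNbr (pathGraph n) u ∩ ↑(codeF n) :=
          ⟨(mem_cn_mk _ hm u).mpr (by omega), by rw [Finset.mem_coe, mem_codeF_mk]; omega⟩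
        rw [h] at hwmem
        have := (mem_cn_mk _ hm v).mp hwmem.1
        omega
    · -- distance two case : v = u + 2
      have h2 : v.val = u.val + 2 := by omega
      by_cases hpar : u.val % 2 = 0
      · have hwmem : u ∈ closedNbr (pathGraph n) u ∩ ↑(codeF n) :=
          ⟨(mem_cn u u).mpr (by omega), by rw [Finset.mem_coe, mem_codeF]; omega⟩
        rw [h] at hwmem
        have := (mem_cn u v).mp hwmem.1
        omega
      · have hm : u.val - 1 < n := by omega
        have hwmem : (⟨u.val - 1, hm⟩ : Fin n) ∈ closedNbr (pathGraph n) u ∩ ↑(codeF n) :=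
          ⟨(mem_cn_mk _ hm u).mpr (by omega), by rw [Finset.mem_coe, mem_codeF_mk]; omega⟩
        rw [h] at hwmem
        have := (mem_cn_mk _ hm v).mp hwmem.1
        omega

lemma card_evens (n : ℕ) :
    ((Finset.range n).filter (fun k => k % 2 = 0)).card = (n + 1) / 2 := by
  induction n with
  | zero => simp
  | succ n ih =>
    rw [Finset.range_add_one, Finset.filter_insert]
    by_cases h : n % 2 = 0
    · rw [if_pos h, Finset.card_insert_of_notMem (by simp), ih]; omega
    · rw [if_neg h, ih]; omega

lemma card_codeF {n : ℕ} (hn : 4 ≤ n) : (codeF n).card = (n + 2) / 2 := by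
  have hbij : (codeF n).card = ((Finset.range n).filter (fun k => k % 2 = 0 ∨ k = n - 3)).card := by
    apply Finset.card_bij (fun v _ => v.val)
    · intro a ha
      rw [mem_codeF] at ha
      simp only [Finset.mem_filter, Finset.mem_range]
      exact ⟨a.isLt, ha⟩
    · intro a _ b _ hab; exact Fin.ext hab
    · intro b hb
      simp only [Finset.mem_filter, Finset.mem_range] at hb
      exact ⟨⟨b, hb.1⟩, (mem_codeF_mk _ hb.1).mpr hb.2, rfl⟩
  rw [hbij]
  by_cases h : n % 2 = 0
  · have he : ((Finset.range n).filter (fun k => k % 2 = 0 ∨ k = n - 3))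
        = insert (n - 3) ((Finset.range n).filter (fun k => k % 2 = 0)) := by
      ext k
      simp only [Finset.mem_filter, Finset.mem_range, Finset.mem_insert]
      omega
    rw [he, Finset.card_insert_of_notMem (by simp only [Finset.mem_filter, Finset.mem_range]; omega),
      card_evens]
    omega
  · have he : ((Finset.range n).filter (fun k => k % 2 = 0 ∨ k = n - 3))
        = (Finset.range n).filter (fun k => k % 2 = 0) := by
      ext k
      simp only [Finset.mem_filter, Finset.mem_range]
      omega
    rw [he, card_evens]
    omega

end IdCodeAux


namespace IdCodeAux2

/-- window lemma: any 4 consecutive positions contain at least 2 code elements -/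
lemma window {n : ℕ} (N : Finset ℕ)
    (hdom : ∀ v, v < n → ∃ k ∈ N, k = v ∨ k + 1 = v ∨ v + 1 = k)
    (hsep : ∀ u, u + 1 < n → ∃ k ∈ N, k + 1 = u ∨ k = u + 2)
    (i : ℕ) (hi : i + 4 ≤ n) :
    2 ≤ (N ∩ Finset.Icc i (i + 3)).card := by
  obtain ⟨a, haN, ha⟩ := hsep (i + 1) (by omega)
  rcases ha with ha | ha
  · -- a = i
    obtain ⟨b, hbN, hb⟩ := hdom (i + 2) (by omega)
    have hsub : ({a, b} : Finset ℕ) ⊆ N ∩ Finset.Icc i (i + 3) := by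
      intro x hx
      rw [Finset.mem_insert, Finset.mem_singleton] at hx
      rw [Finset.mem_inter, Finset.mem_Icc]
      rcases hx with rfl | rfl
      · exact ⟨haN, by omega, by omega⟩
      · exact ⟨hbN, by omega, by omega⟩
    calc 2 = ({a, b} : Finset ℕ).card := (Finset.card_pair (by omega)).symm
      _ ≤ _ := Finset.card_le_card hsub
  · -- a = i + 3
    obtain ⟨b, hbN, hb⟩ := hdom (i + 1) (by omega)
    have hsub : ({a, b} : Finset ℕ) ⊆ N ∩ Finset.Icc i (i + 3) := by
      intro x hx
      rw [Finset.mem_insert, Finset.mem_singleton] at hx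
      rw [Finset.mem_inter, Finset.mem_Icc]
      rcases hx with rfl | rfl
      · exact ⟨haN, by omega, by omega⟩
      · exact ⟨hbN, by omega, by omega⟩
    calc 2 = ({a, b} : Finset ℕ).card := (Finset.card_pair (by omega)).symm
      _ ≤ _ := Finset.card_le_card hsub

lemma suffix_bound {n : ℕ} (hn : 4 ≤ n) (N : Finset ℕ)
    (hlt : ∀ k ∈ N, k < n)
    (hdom : ∀ v, v < n → ∃ k ∈ N, k = v ∨ k + 1 = v ∨ v + 1 = k)
    (hsep : ∀ u, u + 1 < n → ∃ k ∈ N, k + 1 = u ∨ k = u + 2) :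
    ∀ m j, j + m + 1 = n → 1 ≤ m → 3 ≤ j →
      m / 2 + 1 ≤ (N ∩ Finset.Icc j (n - 1)).card := by
  -- derived facts
  have hn3 : n - 3 ∈ N := by
    obtain ⟨k, hkN, hk⟩ := hsep (n - 2) (by omega)
    have := hlt k hkN
    have hk3 : k = n - 3 := by omega
    rwa [hk3] at hkN
  have hdn : ∃ k ∈ N, n - 2 ≤ k ∧ k < n := by
    obtain ⟨k, hkN, hk⟩ := hdom (n - 1) (by omega)
    have := hlt k hkN
    exact ⟨k, hkN, by omega, this⟩
  have hsepA : ∀ i, i + 4 ≤ n → i ∈ N ∨ i + 3 ∈ N := by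
    intro i hi
    obtain ⟨k, hkN, hk⟩ := hsep (i + 1) (by omega)
    rcases hk with hk | hk
    · left
      have hki : k = i := by omega
      rwa [hki] at hkN
    · right
      have hki : k = i + 3 := by omega
      rwa [hki] at hkN
  intro m
  induction m using Nat.strong_induction_on with
  | _ m ih =>
    intro j hjm hm1 hj3
    by_cases hm6 : 6 ≤ m
    · -- split off a window of 4 at the left
      have hwin := window N hdom hsep j (by omega)
      have hih := ih (m - 4) (by omega) (j + 4) (by omega) (by omega) (by omega)
      have hdisj : Disjoint (N ∩ Finset.Icc j (j + 3)) (N ∩ Finset.Icc (j + 4) (n - 1)) := by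
        apply Finset.disjoint_left.mpr
        intro x hx hx'
        rw [Finset.mem_inter, Finset.mem_Icc] at hx hx'
        omega
      have hsub : (N ∩ Finset.Icc j (j + 3)) ∪ (N ∩ Finset.Icc (j + 4) (n - 1))
          ⊆ N ∩ Finset.Icc j (n - 1) := by
        intro x hx
        rw [Finset.mem_union, Finset.mem_inter, Finset.mem_inter, Finset.mem_Icc, Finset.mem_Icc] at hx
        rw [Finset.mem_inter, Finset.mem_Icc]
        rcases hx with ⟨h1, h2⟩ | ⟨h1, h2⟩
        · exact ⟨h1, by omega, by omega⟩
        · exact ⟨h1, by omega, by omega⟩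
      have := Finset.card_le_card hsub
      rw [Finset.card_union_of_disjoint hdisj] at this
      omega
    · -- m ∈ {1,2,3,4,5}
      interval_cases m
      · -- m = 1, j = n - 2
        obtain ⟨k, hkN, hk1, hk2⟩ := hdn
        have : 0 < (N ∩ Finset.Icc j (n - 1)).card := by
          apply Finset.card_pos.mpr
          exact ⟨k, by rw [Finset.mem_inter, Finset.mem_Icc]; exact ⟨hkN, by omega, by omega⟩⟩
        omega
      · -- m = 2, j = n - 3
        obtain ⟨k, hkN, hk1, hk2⟩ := hdn
        have hsub : ({n - 3, k} : Finset ℕ) ⊆ N ∩ Finset.Icc j (n - 1) := by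
          intro x hx
          rw [Finset.mem_insert, Finset.mem_singleton] at hx
          rw [Finset.mem_inter, Finset.mem_Icc]
          rcases hx with rfl | rfl
          · exact ⟨hn3, by omega, by omega⟩
          · exact ⟨hkN, by omega, by omega⟩
        calc 2 / 2 + 1 = ({n - 3, k} : Finset ℕ).card := by
              rw [Finset.card_pair (by omega)]
          _ ≤ _ := Finset.card_le_card hsub
      · -- m = 3, j = n - 4 : a window
        have hwin := window N hdom hsep j (by omega)
        have hje : j + 3 = n - 1 := by omega
        rw [hje] at hwin
        omega
      · -- m = 4, j = n - 5
        obtain ⟨a, haN, ha⟩ : ∃ a ∈ N, a = j + 1 ∨ a = j + 4 := by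
          rcases hsepA (j + 1) (by omega) with h | h
          · exact ⟨j + 1, h, Or.inl rfl⟩
          · exact ⟨j + 1 + 3, h, by omega⟩
        obtain ⟨b, hbN, hb⟩ : ∃ b ∈ N, b = j ∨ b = j + 3 := by
          rcases hsepA j (by omega) with h | h
          · exact ⟨j, h, Or.inl rfl⟩
          · exact ⟨j + 3, h, Or.inr rfl⟩
        have hj2 : j + 2 = n - 3 := by omega
        have hsub : ({j + 2, a, b} : Finset ℕ) ⊆ N ∩ Finset.Icc j (n - 1) := by
          intro x hx
          rw [Finset.mem_insert, Finset.mem_insert, Finset.mem_singleton] at hx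
          rw [Finset.mem_inter, Finset.mem_Icc]
          rcases hx with rfl | rfl | rfl
          · exact ⟨hj2 ▸ hn3, by omega, by omega⟩
          · exact ⟨haN, by omega, by omega⟩
          · exact ⟨hbN, by omega, by omega⟩
        have hcard : ({j + 2, a, b} : Finset ℕ).card = 3 := by
          rw [Finset.card_insert_of_notMem (by
            rw [Finset.mem_insert, Finset.mem_singleton]; omega),
            Finset.card_pair (by omega)]
        calc 4 / 2 + 1 = ({j + 2, a, b} : Finset ℕ).card := by rw [hcard]
          _ ≤ _ := Finset.card_le_card hsub
      · -- m = 5 : reduce to m = 4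
        have h4 := ih 4 (by omega) (j + 1) (by omega) (by omega) (by omega)
        have hsub : N ∩ Finset.Icc (j + 1) (n - 1) ⊆ N ∩ Finset.Icc j (n - 1) := by
          exact Finset.inter_subset_inter (Finset.Subset.refl N)
            (Finset.Icc_subset_Icc (by omega) le_rfl)
        have := Finset.card_le_card hsub
        omega

lemma lower_core {n : ℕ} (hn : 4 ≤ n) (N : Finset ℕ)
    (hlt : ∀ k ∈ N, k < n)
    (hdom : ∀ v, v < n → ∃ k ∈ N, k = v ∨ k + 1 = v ∨ v + 1 = k)
    (hsep : ∀ u, u + 1 < n → ∃ k ∈ N, k + 1 = u ∨ k = u + 2) :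
    (n + 2) / 2 ≤ N.card := by
  have h2 : 2 ∈ N := by
    obtain ⟨k, hkN, hk⟩ := hsep 0 (by omega)
    have hk2 : k = 2 := by omega
    rwa [hk2] at hkN
  have h01 : ∃ k ∈ N, k ≤ 1 := by
    obtain ⟨k, hkN, hk⟩ := hdom 0 (by omega)
    exact ⟨k, hkN, by omega⟩
  by_cases hn5 : 5 ≤ n
  · -- prefix [0,2] has ≥ 2, suffix [3, n-1] has ≥ (n-4)/2 + 1
    obtain ⟨a, haN, ha⟩ := h01
    have hsuf := suffix_bound hn N hlt hdom hsep (n - 4) 3 (by omega) (by omega) (by omega)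
    have hsub : ({a, 2} : Finset ℕ) ∪ (N ∩ Finset.Icc 3 (n - 1)) ⊆ N := by
      intro x hx
      rw [Finset.mem_union, Finset.mem_insert, Finset.mem_singleton, Finset.mem_inter] at hx
      rcases hx with (rfl | rfl) | hx
      · exact haN
      · exact h2
      · exact hx.1
    have hdisj : Disjoint ({a, 2} : Finset ℕ) (N ∩ Finset.Icc 3 (n - 1)) := by
      apply Finset.disjoint_left.mpr
      intro x hx hx'
      rw [Finset.mem_insert, Finset.mem_singleton] at hx
      rw [Finset.mem_inter, Finset.mem_Icc] at hx'
      omega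
    have hle := Finset.card_le_card hsub
    rw [Finset.card_union_of_disjoint hdisj, Finset.card_pair (by omega)] at hle
    omega
  · -- n = 4
    have hn4 : n = 4 := by omega
    subst hn4
    have h1 : 1 ∈ N := by
      obtain ⟨k, hkN, hk⟩ := hsep 2 (by omega)
      have hl := hlt k hkN
      have hk1 : k = 1 := by omega
      rwa [hk1] at hkN
    obtain ⟨c, hcN, hc⟩ : ∃ c ∈ N, c = 0 ∨ c = 3 := by
      obtain ⟨k, hkN, hk⟩ := hsep 1 (by omega)
      exact ⟨k, hkN, by omega⟩
    have hsub : ({1, 2, c} : Finset ℕ) ⊆ N := by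
      intro x hx
      rw [Finset.mem_insert, Finset.mem_insert, Finset.mem_singleton] at hx
      rcases hx with rfl | rfl | rfl
      exacts [h1, h2, hcN]
    have hcard : ({1, 2, c} : Finset ℕ).card = 3 := by
      rw [Finset.card_insert_of_notMem (by
        rw [Finset.mem_insert, Finset.mem_singleton]; omega),
        Finset.card_pair (by omega)]
    have := Finset.card_le_card hsub
    omega

end IdCodeAux2


theorem stmt_11 (n : ℕ) (hn : 4 ≤ n) :
    IsLeast {m : ℕ | ∃ C : Set (Fin n), IsIdCode (pathGraph n) C ∧ C.ncard = m}
      ((n + 2) / 2) := by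
  constructor
  · -- membership : the code codeF n works
    refine ⟨↑(IdCodeAux.codeF n), ⟨fun v => IdCodeAux.code_nonempty v, ?_⟩, ?_⟩
    · intro u v h
      by_contra hne
      rcases lt_trichotomy u.val v.val with hlt | heq | hlt
      · exact IdCodeAux.code_key hn u v hlt h
      · exact hne (Fin.ext heq)
      · exact IdCodeAux.code_key hn v u hlt h.symm
    · rw [Set.ncard_coe_finset, IdCodeAux.card_codeF hn]
  · -- lower bound
    rintro m ⟨C, ⟨hdomC, hsepC⟩, rfl⟩
    classical
    have hfin : C.Finite := Set.toFinite C
    have hcard : C.ncard = (hfin.toFinset.image Fin.val).card := by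
      rw [Set.ncard_eq_toFinset_card C hfin,
        Finset.card_image_of_injective _ Fin.val_injective]
    rw [hcard]
    apply IdCodeAux2.lower_core hn
    · intro k hk
      rw [Finset.mem_image] at hk
      obtain ⟨w, _, rfl⟩ := hk
      exact w.isLt
    · intro v hv
      obtain ⟨w, hw1, hw2⟩ := hdomC ⟨v, hv⟩
      refine ⟨w.val, ?_, ?_⟩
      · rw [Finset.mem_image]
        exact ⟨w, by rw [Set.Finite.mem_toFinset]; exact hw2, rfl⟩
      · have := (IdCodeAux.mem_cn_mk' w v hv).mp hw1
        omega
    · intro u hu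
      have hu1 : u < n := by omega
      have hne : closedNbr (pathGraph n) (⟨u, hu1⟩ : Fin n) ∩ C ≠
          closedNbr (pathGraph n) (⟨u + 1, hu⟩ : Fin n) ∩ C := by
        intro he
        have h' := hsepC _ _ he
        simp only [Fin.mk.injEq] at h'
        omega
      have hnot : ¬ (closedNbr (pathGraph n) (⟨u, hu1⟩ : Fin n) ∩ C ⊆
            closedNbr (pathGraph n) (⟨u + 1, hu⟩ : Fin n) ∩ C ∧
          closedNbr (pathGraph n) (⟨u + 1, hu⟩ : Fin n) ∩ C ⊆
            closedNbr (pathGraph n) (⟨u, hu1⟩ : Fin n) ∩ C) :=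
        fun hc => hne (hc.1.antisymm hc.2)
      rcases not_and_or.mp hnot with hs | hs
      · obtain ⟨x, hxA, hxB⟩ := Set.not_subset.mp hs
        have hxC : x ∈ C := hxA.2
        have hxcn := (IdCodeAux.mem_cn_mk' x u hu1).mp hxA.1
        have hxnot : ¬ x ∈ closedNbr (pathGraph n) (⟨u + 1, hu⟩ : Fin n) :=
          fun hc => hxB ⟨hc, hxC⟩
        rw [IdCodeAux.mem_cn_mk' x (u + 1) hu] at hxnot
        push_neg at hxnot
        refine ⟨x.val, ?_, by omega⟩
        rw [Finset.mem_image]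
        exact ⟨x, by rw [Set.Finite.mem_toFinset]; exact hxC, rfl⟩
      · obtain ⟨x, hxA, hxB⟩ := Set.not_subset.mp hs
        have hxC : x ∈ C := hxA.2
        have hxcn := (IdCodeAux.mem_cn_mk' x (u + 1) hu).mp hxA.1
        have hxnot : ¬ x ∈ closedNbr (pathGraph n) (⟨u, hu1⟩ : Fin n) :=
          fun hc => hxB ⟨hc, hxC⟩
        rw [IdCodeAux.mem_cn_mk' x u hu1] at hxnot
        push_neg at hxnot
        refine ⟨x.val, ?_, by omega⟩
        rw [Finset.mem_image]
        exact ⟨x, by rw [Set.Finite.mem_toFinset]; exact hxC, rfl⟩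
end

section
/- For the 1-corona K_m∘₁ of the complete graph K_m with m ≥ 3 (each clique vertex given one pendant leaf, order 2m), the minimum size of a total dominating identifying code equals 2m − 1. -/
open SimpleGraph

/-- The 1-corona of the complete graph K_m: clique vertices (i,0), pendant leaves (i,1). -/
def coronaComplete (m : ℕ) : SimpleGraph (Fin m × Fin 2) :=
  SimpleGraph.fromRel (fun p q =>
    (p.2 = 0 ∧ q.2 = 0 ∧ p.1 ≠ q.1) ∨ (p.1 = q.1 ∧ p.2 = 0 ∧ q.2 = 1))

lemma corona_adj (m : ℕ) (p q : Fin m × Fin 2) :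
    (coronaComplete m).Adj p q ↔
      (p.2 = 0 ∧ q.2 = 0 ∧ p.1 ≠ q.1) ∨ (p.1 = q.1 ∧ p.2 = 0 ∧ q.2 = 1)
        ∨ (p.1 = q.1 ∧ p.2 = 1 ∧ q.2 = 0) := by
  simp only [coronaComplete, fromRel_adj, ne_eq, Prod.ext_iff]
  constructor
  · rintro ⟨hne, h | h⟩ <;> tauto
  · rintro (⟨h1, h2, h3⟩ | ⟨h1, h2, h3⟩ | ⟨h1, h2, h3⟩) <;>
    · refine ⟨by simp [h1, h2, h3]; try omega, by tauto⟩

lemma adj1 (m : ℕ) (i : Fin m) (q : Fin m × Fin 2) :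
    (coronaComplete m).Adj (i, 1) q ↔ q = (i, 0) := by
  rw [corona_adj]
  constructor
  · rintro (⟨h, _⟩ | ⟨_, h, _⟩ | ⟨h1, _, h3⟩)
    · simp at h
    · simp at h
    · exact Prod.ext h1.symm h3
  · rintro rfl; exact Or.inr (Or.inr ⟨rfl, rfl, rfl⟩)

lemma mem_closed1 (m : ℕ) (i : Fin m) (q : Fin m × Fin 2) :
    q ∈ closedNbr (coronaComplete m) (i, 1) ↔ q = (i, 1) ∨ q = (i, 0) := by
  simp only [closedNbr, Set.mem_insert_iff, mem_neighborSet, adj1]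

lemma mem_closed0 (m : ℕ) (i : Fin m) (q : Fin m × Fin 2) :
    q ∈ closedNbr (coronaComplete m) (i, 0) ↔ q.2 = 0 ∨ q = (i, 1) := by
  simp only [closedNbr, Set.mem_insert_iff, mem_neighborSet, corona_adj, Prod.ext_iff]
  obtain ⟨k, c⟩ := q
  fin_cases c <;> simp
  · rcases eq_or_ne i k with h | h <;> tauto
  · exact eq_comm

lemma fin2_cases : ∀ c : Fin 2, c = 0 ∨ c = 1 := by decide

lemma ncard_compl_singleton (m : ℕ) (x : Fin m × Fin 2) :
    ({x}ᶜ : Set (Fin m × Fin 2)).ncard = 2 * m - 1 := by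
  have h := Set.ncard_add_ncard_compl ({x} : Set (Fin m × Fin 2))
  rw [Set.ncard_singleton] at h
  have hc : Nat.card (Fin m × Fin 2) = 2 * m := by
    simp [Nat.card_eq_fintype_card]; ring
  omega

lemma exists_third (m : ℕ) (hm : 3 ≤ m) (i j : Fin m) : ∃ k : Fin m, k ≠ i ∧ k ≠ j := by
  have h2 : ({i, j} : Finset (Fin m)).card ≤ 2 := by
    have := Finset.card_insert_le i ({j} : Finset (Fin m)); simpa using this
  have hpos : 0 < ({i, j}ᶜ : Finset (Fin m)).card := by
    rw [Finset.card_compl]; simp only [Fintype.card_fin]; omega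
  obtain ⟨k, hk⟩ := Finset.card_pos.mp hpos
  simp only [Finset.mem_compl, Finset.mem_insert, Finset.mem_singleton] at hk
  exact ⟨k, by tauto⟩

theorem stmt_13 (m : ℕ) (hm : 3 ≤ m) :
    IsLeast {n : ℕ | ∃ C : Set (Fin m × Fin 2),
        IsTotalIdCode (coronaComplete m) C ∧ C.ncard = n} (2 * m - 1) := by
  have hne0 : (0 : Fin 2) ≠ 1 := by decide
  constructor
  · -- membership: C = complement of one leaf
    have hm0 : 0 < m := by omega
    set i0 : Fin m := ⟨0, hm0⟩ with hi0
    refine ⟨({((i0, 1) : Fin m × Fin 2)}ᶜ : Set _), ⟨?_, ?_⟩, ?_⟩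
    · -- total domination
      rintro ⟨i, b⟩
      fin_cases b
      · obtain ⟨j, hji, _⟩ := exists_third m hm i i
        refine ⟨(j, 0), ?_, ?_⟩
        · exact (corona_adj m (i, 0) (j, 0)).mpr (Or.inl ⟨rfl, rfl, hji.symm⟩)
        · intro hmem
          exact hne0 (congrArg Prod.snd (Set.mem_singleton_iff.mp hmem))
      · refine ⟨(i, 0), ?_, ?_⟩
        · exact (corona_adj m (i, 1) (i, 0)).mpr (Or.inr (Or.inr ⟨rfl, rfl, rfl⟩))
        · intro hmem
          exact hne0 (congrArg Prod.snd (Set.mem_singleton_iff.mp hmem))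
    · -- separation
      rintro ⟨i, a⟩ ⟨j, b⟩ H
      have key0 : ∀ k l : Fin m,
          closedNbr (coronaComplete m) (k, 0) ∩ ({((i0, 1) : Fin m × Fin 2)}ᶜ : Set _)
            = closedNbr (coronaComplete m) (l, 0) ∩ ({((i0, 1) : Fin m × Fin 2)}ᶜ : Set _)
            → k ≠ l → k = i0 := by
        intro k l Hkl hkl
        by_contra hk
        have hmem : (k, (1 : Fin 2)) ∈ closedNbr (coronaComplete m) (k, 0)
            ∩ ({((i0, 1) : Fin m × Fin 2)}ᶜ : Set _) := by
          refine ⟨(mem_closed0 m k (k, 1)).mpr (Or.inr rfl), ?_⟩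
          intro hmem
          exact hk (congrArg Prod.fst (Set.mem_singleton_iff.mp hmem))
        rw [Hkl] at hmem
        rcases (mem_closed0 m l (k, 1)).mp hmem.1 with h | h
        · exact hne0 h.symm
        · exact hkl (congrArg Prod.fst h)
      rcases fin2_cases a with rfl | rfl <;> rcases fin2_cases b with rfl | rfl
      · -- (i,0) vs (j,0)
        rcases eq_or_ne i j with rfl | hij
        · rfl
        · exact absurd ((key0 i j H hij).trans (key0 j i H.symm hij.symm).symm) hij
      · -- (i,0) vs (j,1)
        exfalso
        obtain ⟨k, hki, hkj⟩ := exists_third m hm i j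
        have hmem : (k, (0 : Fin 2)) ∈ closedNbr (coronaComplete m) (i, 0)
            ∩ ({((i0, 1) : Fin m × Fin 2)}ᶜ : Set _) := by
          refine ⟨(mem_closed0 m i (k, 0)).mpr (Or.inl rfl), ?_⟩
          intro hmem
          exact hne0 (congrArg Prod.snd (Set.mem_singleton_iff.mp hmem))
        rw [H] at hmem
        rcases (mem_closed1 m j (k, 0)).mp hmem.1 with h | h
        · exact hne0 (congrArg Prod.snd h)
        · exact hkj (congrArg Prod.fst h)
      · -- (i,1) vs (j,0)
        exfalso
        obtain ⟨k, hkj, hki⟩ := exists_third m hm j i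
        have hmem : (k, (0 : Fin 2)) ∈ closedNbr (coronaComplete m) (j, 0)
            ∩ ({((i0, 1) : Fin m × Fin 2)}ᶜ : Set _) := by
          refine ⟨(mem_closed0 m j (k, 0)).mpr (Or.inl rfl), ?_⟩
          intro hmem
          exact hne0 (congrArg Prod.snd (Set.mem_singleton_iff.mp hmem))
        rw [← H] at hmem
        rcases (mem_closed1 m i (k, 0)).mp hmem.1 with h | h
        · exact hne0 (congrArg Prod.snd h)
        · exact hki (congrArg Prod.fst h)
      · -- (i,1) vs (j,1)
        have hmem : (i, (0 : Fin 2)) ∈ closedNbr (coronaComplete m) (i, 1)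
            ∩ ({((i0, 1) : Fin m × Fin 2)}ᶜ : Set _) := by
          refine ⟨(mem_closed1 m i (i, 0)).mpr (Or.inr rfl), ?_⟩
          intro hmem
          exact hne0 (congrArg Prod.snd (Set.mem_singleton_iff.mp hmem))
        rw [H] at hmem
        rcases (mem_closed1 m j (i, 0)).mp hmem.1 with h | h
        · exact absurd ((congrArg Prod.snd h).symm : (1 : Fin 2) = 0) (Ne.symm hne0)
        · exact congrArg (fun x => (x, (1 : Fin 2))) (congrArg Prod.fst h)
    · exact ncard_compl_singleton m (i0, 1)
  · -- lower bound
    rintro n ⟨C, ⟨hdom, hsep⟩, rfl⟩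
    have hc0 : ∀ i : Fin m, ((i, 0) : Fin m × Fin 2) ∈ C := by
      intro i
      obtain ⟨q, hq, hqC⟩ := hdom (i, 1)
      have hq' : q = (i, 0) := (adj1 m i q).mp hq
      rwa [hq'] at hqC
    have key : ∀ i j : Fin m, i ≠ j → ((i, 1) : Fin m × Fin 2) ∉ C
        → ((j, 1) : Fin m × Fin 2) ∉ C → False := by
      intro i j hij hi hj
      have hEq : closedNbr (coronaComplete m) (i, 0) ∩ C
          = closedNbr (coronaComplete m) (j, 0) ∩ C := by
        ext q
        simp only [Set.mem_inter_iff, mem_closed0]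
        constructor
        · rintro ⟨h0 | rfl, hqC⟩
          · exact ⟨Or.inl h0, hqC⟩
          · exact absurd hqC hi
        · rintro ⟨h0 | rfl, hqC⟩
          · exact ⟨Or.inl h0, hqC⟩
          · exact absurd hqC hj
      exact hij (congrArg Prod.fst (hsep _ _ hEq))
    by_cases hall : ∀ i : Fin m, ((i, 1) : Fin m × Fin 2) ∈ C
    · have hCuniv : C = Set.univ := by
        ext ⟨i, b⟩
        simp only [Set.mem_univ, iff_true]
        fin_cases b
        · exact hc0 i
        · exact hall i
      rw [hCuniv, Set.ncard_univ]
      have hc : Nat.card (Fin m × Fin 2) = 2 * m := by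
        simp [Nat.card_eq_fintype_card]; ring
      omega
    · push_neg at hall
      obtain ⟨i1, hi1⟩ := hall
      have hsub : ({((i1, 1) : Fin m × Fin 2)}ᶜ : Set _) ⊆ C := by
        rintro ⟨k, c⟩ hk
        fin_cases c
        · exact hc0 k
        · by_contra hkC
          rcases eq_or_ne k i1 with rfl | hne
          · exact hk rfl
          · exact key k i1 hne hkC hi1
      calc 2 * m - 1 = ({((i1, 1) : Fin m × Fin 2)}ᶜ : Set _).ncard :=
            (ncard_compl_singleton m (i1, 1)).symm
        _ ≤ C.ncard := Set.ncard_le_ncard hsub (Set.toFinite C)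
end

section
/- For the 1-corona K_m∘₁ of the complete graph K_m with m ≥ 3, the minimum size of an identifying code equals m + 1. -/
open SimpleGraph

lemma fin2_cases_s14 (b : Fin 2) : b = 0 ∨ b = 1 := by omega

lemma cn1_s14 {m : ℕ} (i : Fin m) :
    closedNbr (coronaComplete m) (i, 1) = {q | q.1 = i} := by
  ext ⟨j, b⟩
  rcases fin2_cases_s14 b with hb | hb <;> subst hb <;>
    simp [closedNbr, coronaComplete, Prod.ext_iff, Fin.ext_iff, -Fin.val_eq_zero_iff] <;> tauto

lemma cn0_s14 {m : ℕ} (i : Fin m) :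
    closedNbr (coronaComplete m) (i, 0) = {q | q.2 = 0 ∨ q.1 = i} := by
  ext ⟨j, b⟩
  rcases fin2_cases_s14 b with hb | hb <;> subst hb <;>
    simp [closedNbr, coronaComplete, Prod.ext_iff, Fin.ext_iff, -Fin.val_eq_zero_iff] <;> tauto

lemma mem_cn1 {m : ℕ} {i : Fin m} {q : Fin m × Fin 2} :
    q ∈ closedNbr (coronaComplete m) (i, 1) ↔ q.1 = i := by rw [cn1_s14]; rfl

lemma mem_cn0 {m : ℕ} {i : Fin m} {q : Fin m × Fin 2} :
    q ∈ closedNbr (coronaComplete m) (i, 0) ↔ q.2 = 0 ∨ q.1 = i := by rw [cn0_s14]; rfl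

/-- Auxiliary: a leaf and a clique vertex can't have equal traces on the witness code. -/
lemma aux10 {m : ℕ} (z o : Fin m) (hzo : z ≠ o) (C : Set (Fin m × Fin 2))
    (hC : ∀ p : Fin m × Fin 2, p ∈ C ↔ (p.1 ≠ z ∧ p.2 = 1) ∨ p = (z, 0) ∨ p = (o, 0))
    (i j : Fin m)
    (h : closedNbr (coronaComplete m) (i, 1) ∩ C = closedNbr (coronaComplete m) (j, 0) ∩ C) :
    False := by
  have h' := Set.ext_iff.mp h
  by_cases hi : i = z
  · subst hi
    have hmem : (o, (0 : Fin 2)) ∈ closedNbr (coronaComplete m) (j, 0) ∩ C :=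
      ⟨mem_cn0.2 (Or.inl rfl), (hC _).2 (Or.inr (Or.inr rfl))⟩
    have := mem_cn1.1 ((h' _).2 hmem).1
    exact hzo this.symm
  · have hz : (z, (0 : Fin 2)) ∈ closedNbr (coronaComplete m) (j, 0) ∩ C :=
      ⟨mem_cn0.2 (Or.inl rfl), (hC _).2 (Or.inr (Or.inl rfl))⟩
    have ho : (o, (0 : Fin 2)) ∈ closedNbr (coronaComplete m) (j, 0) ∩ C :=
      ⟨mem_cn0.2 (Or.inl rfl), (hC _).2 (Or.inr (Or.inr rfl))⟩
    have h1 : z = i := mem_cn1.1 ((h' _).2 hz).1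
    have h2 : o = i := mem_cn1.1 ((h' _).2 ho).1
    exact hzo (h1.trans h2.symm)

theorem stmt_14 (m : ℕ) (hm : 3 ≤ m) :
    IsLeast {n : ℕ | ∃ C : Set (Fin m × Fin 2),
        IsIdCode (coronaComplete m) C ∧ C.ncard = n} (m + 1) := by
  set z : Fin m := ⟨0, by omega⟩ with hzdef
  set o : Fin m := ⟨1, by omega⟩ with hodef
  have hzo : z ≠ o := by simp [hzdef, hodef, Fin.ext_iff]
  constructor
  · -- membership: the witness code
    classical
    set F : Finset (Fin m × Fin 2) :=
      ((Finset.univ.erase z).image fun i => (i, (1 : Fin 2))) ∪ {(z, 0), (o, 0)} with hFdef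
    have hC : ∀ p : Fin m × Fin 2,
        p ∈ (↑F : Set (Fin m × Fin 2)) ↔ (p.1 ≠ z ∧ p.2 = 1) ∨ p = (z, 0) ∨ p = (o, 0) := by
      rintro ⟨j, b⟩
      simp only [hFdef, Finset.coe_union, Finset.coe_image, Set.mem_union, Set.mem_image,
        Finset.mem_coe, Finset.mem_erase, Finset.mem_univ, and_true, Finset.mem_insert,
        Finset.mem_singleton, Prod.mk.injEq]
      constructor
      · rintro (⟨a, ha, rfl, rfl⟩ | ⟨rfl, rfl⟩ | ⟨rfl, rfl⟩)
        · exact Or.inl ⟨ha, rfl⟩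
        · exact Or.inr (Or.inl ⟨rfl, rfl⟩)
        · exact Or.inr (Or.inr ⟨rfl, rfl⟩)
      · rintro (⟨ha, rfl⟩ | h | h)
        · exact Or.inl ⟨j, ha, rfl, rfl⟩
        · exact Or.inr (Or.inl (Prod.mk.injEq .. ▸ h))
        · exact Or.inr (Or.inr (Prod.mk.injEq .. ▸ h))
    refine ⟨↑F, ⟨?_, ?_⟩, ?_⟩
    · -- covering
      rintro ⟨i, b⟩
      rcases fin2_cases_s14 b with hb | hb <;> subst hb
      · exact ⟨(z, 0), mem_cn0.2 (Or.inl rfl), (hC _).2 (Or.inr (Or.inl rfl))⟩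
      · by_cases hi : i = z
        · subst hi
          exact ⟨(z, 0), mem_cn1.2 rfl, (hC _).2 (Or.inr (Or.inl rfl))⟩
        · exact ⟨(i, 1), mem_cn1.2 rfl, (hC _).2 (Or.inl ⟨hi, rfl⟩)⟩
    · -- separation
      rintro ⟨i, b⟩ ⟨j, c⟩ h
      rcases fin2_cases_s14 b with hb | hb <;> rcases fin2_cases_s14 c with hc | hc <;>
          subst hb <;> subst hc
      · -- clique-clique
        by_cases hij : i = j
        · rw [hij]
        have h' := Set.ext_iff.mp h
        by_cases hi : i = z
        · subst hi
          have hj : j ≠ z := fun hh => hij (hh ▸ rfl)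
          have hmem : (j, (1 : Fin 2)) ∈ closedNbr (coronaComplete m) (j, 0) ∩ ↑F :=
            ⟨mem_cn0.2 (Or.inr rfl), (hC _).2 (Or.inl ⟨hj, rfl⟩)⟩
          rcases mem_cn0.1 ((h' _).2 hmem).1 with h1 | h1
          · simp at h1
          · exact absurd h1 hj
        · have hmem : (i, (1 : Fin 2)) ∈ closedNbr (coronaComplete m) (i, 0) ∩ ↑F :=
            ⟨mem_cn0.2 (Or.inr rfl), (hC _).2 (Or.inl ⟨hi, rfl⟩)⟩
          rcases mem_cn0.1 ((h' _).1 hmem).1 with h1 | h1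
          · simp at h1
          · exact absurd h1 hij
      · exact absurd h.symm (fun hh => aux10 z o hzo _ hC j i hh)
      · exact absurd h (fun hh => aux10 z o hzo _ hC i j hh)
      · -- leaf-leaf
        have h' := Set.ext_iff.mp h
        by_cases hi : i = z
        · subst hi
          by_cases hj : j = z
          · rw [hj]
          · have hmem : (j, (1 : Fin 2)) ∈ closedNbr (coronaComplete m) (j, 1) ∩ ↑F :=
              ⟨mem_cn1.2 rfl, (hC _).2 (Or.inl ⟨hj, rfl⟩)⟩
            exact absurd (mem_cn1.1 ((h' _).2 hmem).1) hj
        · have hmem : (i, (1 : Fin 2)) ∈ closedNbr (coronaComplete m) (i, 1) ∩ ↑F :=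
            ⟨mem_cn1.2 rfl, (hC _).2 (Or.inl ⟨hi, rfl⟩)⟩
          exact Prod.ext (mem_cn1.1 ((h' _).1 hmem).1) rfl
    · -- cardinality
      rw [Set.ncard_coe_finset]
      have hdisj : Disjoint ((Finset.univ.erase z).image fun i => (i, (1 : Fin 2)))
          ({(z, 0), (o, 0)} : Finset (Fin m × Fin 2)) := by
        simp only [Finset.disjoint_left, Finset.mem_image, Finset.mem_insert,
          Finset.mem_singleton]
        rintro p ⟨a, ha, rfl⟩ (h | h) <;> simp [Prod.ext_iff] at h
      rw [hFdef, Finset.card_union_of_disjoint hdisj,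
        Finset.card_image_of_injective _ (fun a b hab => (Prod.mk.injEq ..).mp hab |>.1),
        Finset.card_erase_of_mem (Finset.mem_univ z), Finset.card_univ, Fintype.card_fin]
      have h2 : ({(z, 0), (o, 0)} : Finset (Fin m × Fin 2)).card = 2 := by
        rw [Finset.card_insert_of_notMem (by simp [Prod.ext_iff, hzo]),
          Finset.card_singleton]
      rw [h2]; omega
  · -- lower bound
    rintro n ⟨C, ⟨hcov, hsep⟩, rfl⟩
    by_contra hlt
    push_neg at hlt
    have hle : C.ncard ≤ m := by omega
    classical
    let f : Fin m → Fin m × Fin 2 := fun i => (hcov (i, 1)).some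
    have hf : ∀ i, f i ∈ closedNbr (coronaComplete m) (i, 1) ∩ C :=
      fun i => (hcov (i, 1)).some_mem
    have hf1 : ∀ i, (f i).1 = i := fun i => mem_cn1.1 (hf i).1
    have hfC : ∀ i, f i ∈ C := fun i => (hf i).2
    have hinj : Function.Injective f := fun a b hab => by
      rw [← hf1 a, ← hf1 b, hab]
    have hrange : Set.range f ⊆ C := by rintro _ ⟨i, rfl⟩; exact hfC i
    have hcardr : (Set.range f).ncard = m := by
      have h1 := Nat.card_range_of_injective hinj
      rw [Nat.card_coe_set_eq] at h1
      simp [h1]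
    have hrc : Set.range f = C :=
      Set.eq_of_subset_of_ncard_le hrange (by omega) (Set.toFinite C)
    have hCmem : ∀ p ∈ C, ∃ k, f k = p := by
      intro p hp; rw [← hrc] at hp; exact hp
    have hpair : ∀ i, f i = (i, 0) ∨ f i = (i, 1) := by
      intro i
      rcases fin2_cases_s14 (f i).2 with h | h
      · left; exact Prod.ext (hf1 i) h
      · right; exact Prod.ext (hf1 i) h
    have h01 : ((0 : Fin 2)) ≠ 1 := by decide
    by_cases hS : ∃ s, f s = (s, 0)
    · obtain ⟨s, hs⟩ := hS
      by_cases hS2 : ∃ t, t ≠ s ∧ f t = (t, 0)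
      · obtain ⟨t, hts, ht⟩ := hS2
        have key : ∀ (a : Fin m), ∀ x ∈ C, x.1 = a → f a = (a, 0) → x.2 = 0 := by
          intro a x hx hxa ha
          obtain ⟨k, rfl⟩ := hCmem x hx
          have : k = a := by rw [← hf1 k, hxa]
          rw [this, ha]
        have heq : closedNbr (coronaComplete m) (s, 0) ∩ C
            = closedNbr (coronaComplete m) (t, 0) ∩ C := by
          ext x
          constructor
          · rintro ⟨hcn, hxC⟩
            refine ⟨mem_cn0.2 ?_, hxC⟩
            rcases mem_cn0.1 hcn with h1 | h1
            · exact Or.inl h1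
            · exact Or.inl (key s x hxC h1 hs)
          · rintro ⟨hcn, hxC⟩
            refine ⟨mem_cn0.2 ?_, hxC⟩
            rcases mem_cn0.1 hcn with h1 | h1
            · exact Or.inl h1
            · exact Or.inl (key t x hxC h1 ht)
        exact hts ((Prod.mk.injEq ..).mp (hsep _ _ heq.symm)).1
      · push_neg at hS2
        have hleaf : ∀ t, t ≠ s → f t = (t, 1) := by
          intro t ht
          rcases hpair t with h | h
          · exact absurd h (hS2 t ht)
          · exact h
        have heq : closedNbr (coronaComplete m) (s, 0) ∩ C
            = closedNbr (coronaComplete m) (s, 1) ∩ C := by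
          ext x
          constructor
          · rintro ⟨hcn, hxC⟩
            refine ⟨mem_cn1.2 ?_, hxC⟩
            obtain ⟨k, rfl⟩ := hCmem x hxC
            rcases mem_cn0.1 hcn with h1 | h1
            · by_contra hk
              have hks : k ≠ s := by
                intro hh; subst hh; exact hk (hf1 k)
              rw [hleaf k hks] at h1
              exact h01 h1.symm
            · exact h1
          · rintro ⟨hcn, hxC⟩
            exact ⟨mem_cn0.2 (Or.inr (mem_cn1.1 hcn)), hxC⟩
        have := (Prod.mk.injEq ..).mp (hsep _ _ heq)
        exact h01 this.2
    · push_neg at hS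
      have hleaf : ∀ t, f t = (t, 1) := by
        intro t
        rcases hpair t with h | h
        · exact absurd h (hS t)
        · exact h
      have heq : closedNbr (coronaComplete m) (z, 0) ∩ C
          = closedNbr (coronaComplete m) (z, 1) ∩ C := by
        ext x
        constructor
        · rintro ⟨hcn, hxC⟩
          refine ⟨mem_cn1.2 ?_, hxC⟩
          obtain ⟨k, rfl⟩ := hCmem x hxC
          rcases mem_cn0.1 hcn with h1 | h1
          · rw [hleaf k] at h1; exact absurd h1.symm h01
          · exact h1
        · rintro ⟨hcn, hxC⟩
          exact ⟨mem_cn0.2 (Or.inr (mem_cn1.1 hcn)), hxC⟩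
      have := (Prod.mk.injEq ..).mp (hsep _ _ heq)
      exact h01 this.2
end
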